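/- arXiv:2010.03811 — 3 statements merged into one kernel-verified Lean document; each statement's English description precedes it below -/
import Mathlib

section
/- Let $F$ be a number field with ring of integers $\mathcal{O}_F$, and let $f$ be a non-negative real-valued function on the nonzero ideals of $\mathcal{O}_F$ with $f(\mathcal{O}_F)=1$ which is multiplicative, i.e. $f(\mathfrak{m}\mathfrak{n})=f(\mathfrak{m})f(\mathfrak{n})$ whenever $\mathfrak{m}$ and $\mathfrak{n}$ are coprime nonzero ideals. Assume there exist positive constants $A$ and $B$ such that for every real $x>1$ one has $\sum_{\mathrm{N}(\mathfrak{p})\le x} f(\mathfrak{p})\log \mathrm{N}(\mathfrak{p}) \le A x$ (sum over nonzero prime ideals $\mathfrak{p}$) and $\sum_{\mathfrak{p}} \sum_{\alpha \ge 2} \frac{f(\mathfrak{p}^{\alpha})}{\mathrm{N}(\mathfrak{p}^{\alpha})} \log \mathrm{N}(\mathfrak{p}^{\alpha}) \le B$. Then for every real $x>1$, $\sum_{\mathrm{N}(\mathfrak{n})\le x} f(\mathfrak{n}) \le (A+B+1) \frac{x}{\log x} \sum_{\mathrm{N}(\mathfrak{n})\le x} \frac{f(\mathfrak{n})}{\mathrm{N}(\mathfrak{n})}$,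 where both sums run over nonzero ideals $\mathfrak{n}$ of $\mathcal{O}_F$ with norm at most $x$. -/
open NumberField Multiset UniqueFactorizationMonoid

section Helpers

lemma tsum_set_finite_eq_sum {ι : Type*} {s : Set ι} (hs : s.Finite) (g : ι → ℝ) :
    ∑' (x : s), g x = ∑ x ∈ hs.toFinset, g x := by
  rw [tsum_subtype, tsum_eq_sum (s := hs.toFinset)
    (fun i hi => Set.indicator_of_notMem (by simpa using hi) g)]
  exact Finset.sum_congr rfl fun i hi => Set.indicator_of_mem (by simpa using hi) g

lemma sum_le_sum_map {α β : Type*} (s : Finset α) (t : Finset β) (g : α → ℝ) (h : β → ℝ)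
    (e : α → β) (hmem : ∀ a ∈ s, e a ∈ t) (hinj : Set.InjOn e s)
    (hval : ∀ a ∈ s, g a = h (e a)) (hnn : ∀ b ∈ t, 0 ≤ h b) :
    ∑ a ∈ s, g a ≤ ∑ b ∈ t, h b := by
  classical
  calc ∑ a ∈ s, g a = ∑ a ∈ s, h (e a) := Finset.sum_congr rfl hval
    _ = ∑ b ∈ s.image e, h b := (Finset.sum_image (fun a ha b hb => hinj ha hb)).symm
    _ ≤ ∑ b ∈ t, h b := Finset.sum_le_sum_of_subset_of_nonneg
        (Finset.image_subset_iff.mpr hmem) (fun b hb _ => hnn b hb)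

lemma sum_le_tsum_map {α ι : Type*} (s : Finset α) (g : α → ℝ) (G : ι → ℝ)
    (hGnn : ∀ i, 0 ≤ G i) (hG : Summable G) (e : α → ι) (hinj : Set.InjOn e s)
    (hval : ∀ a ∈ s, g a = G (e a)) :
    ∑ a ∈ s, g a ≤ ∑' i, G i := by
  classical
  calc ∑ a ∈ s, g a = ∑ a ∈ s, G (e a) := Finset.sum_congr rfl hval
    _ = ∑ b ∈ s.image e, G b := (Finset.sum_image (fun a ha b hb => hinj ha hb)).symm
    _ ≤ ∑' i, G i := Summable.sum_le_tsum _ (fun i _ => hGnn i) hG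

variable {T : Type*} [CommRing T] [IsDedekindDomain T]

/-- The complementary part of `n` after removing all factors `p`. -/
noncomputable def copart (n p : Ideal T) : Ideal T :=
  letI := Classical.decEq (Ideal T)
  ((normalizedFactors n).filter (¬ p = ·)).prod

lemma copart_mul [DecidableEq (Ideal T)] {n : Ideal T} (hn : n ≠ ⊥) (p : Ideal T) :
    n = p ^ (normalizedFactors n).count p * copart n p := by
  rw [copart]
  convert_to n = p ^ (normalizedFactors n).count p *
      ((normalizedFactors n).filter (¬ p = ·)).prod using 3
  · congr!
  nth_rw 1 [← prod_normalizedFactors_eq_self hn, ← Multiset.filter_add_not (p = ·)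
    (normalizedFactors n)]
  rw [Multiset.prod_add, Multiset.pow_count]

lemma copart_coprime {n p : Ideal T} (hp : p ∈ normalizedFactors n) :
    IsCoprime p (copart n p) := by
  classical
  rw [Ideal.isCoprime_iff_sup_eq, copart]
  have hpp : Prime p := prime_of_normalized_factor p hp
  have hpm : p.IsMaximal := (Ideal.isPrime_of_prime hpp).isMaximal hpp.ne_zero
  refine Ideal.sup_multiset_prod_eq_top (fun q hq => ?_)
  have hq' : Prime q := prime_of_normalized_factor q (Multiset.mem_of_mem_filter hq)
  exact hpm.coprime_of_ne ((Ideal.isPrime_of_prime hq').isMaximal hq'.ne_zero)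
    (Multiset.of_mem_filter hq)

lemma copart_ne_bot [DecidableEq (Ideal T)] {n : Ideal T} (hn : n ≠ ⊥) (p : Ideal T) :
    copart n p ≠ ⊥ := by
  intro h
  apply hn
  rw [copart_mul hn p, h, Ideal.mul_bot]

lemma key_identity {F : Type*} [Field F] [NumberField F] [DecidableEq (Ideal (𝓞 F))]
    (f : Ideal (𝓞 F) → ℝ)
    (hf_mult : ∀ m n : Ideal (𝓞 F), m ≠ ⊥ → n ≠ ⊥ → IsCoprime m n →
      f (m * n) = f m * f n)
    {n : Ideal (𝓞 F)} (hn : n ≠ ⊥) :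
    f n * Real.log (Ideal.absNorm n) = ∑ p ∈ (normalizedFactors n).toFinset,
      f (p ^ (normalizedFactors n).count p) * f (copart n p) *
        Real.log (Ideal.absNorm (p ^ (normalizedFactors n).count p)) := by
  have hfac : ∀ p ∈ (normalizedFactors n).toFinset, p ^ (normalizedFactors n).count p ≠ ⊥ := by
    intro p hp
    have hpp : Prime p := prime_of_normalized_factor p (Multiset.mem_toFinset.mp hp)
    exact pow_ne_zero _ hpp.ne_zero
  have hprod : n = ∏ p ∈ (normalizedFactors n).toFinset, p ^ (normalizedFactors n).count p := by
    conv_lhs => rw [← prod_normalizedFactors_eq_self hn]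
    exact Finset.prod_multiset_count _
  have hlog : Real.log (Ideal.absNorm n) =
      ∑ p ∈ (normalizedFactors n).toFinset,
        Real.log (Ideal.absNorm (p ^ (normalizedFactors n).count p)) := by
    conv_lhs => rw [hprod]
    rw [map_prod, Nat.cast_prod, Real.log_prod]
    intro p hp
    rw [Nat.cast_ne_zero, ne_eq, Ideal.absNorm_eq_zero_iff]
    exact hfac p hp
  rw [hlog, Finset.mul_sum]
  refine Finset.sum_congr rfl fun p hp => ?_
  have hfn : f n = f (p ^ (normalizedFactors n).count p) * f (copart n p) := by
    conv_lhs => rw [copart_mul hn p]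
    exact hf_mult _ _ (hfac p hp) (copart_ne_bot hn p)
      ((copart_coprime (Multiset.mem_toFinset.mp hp)).pow_left)
  rw [hfn]

end Helpers

set_option maxHeartbeats 2000000 in
/-- (Hall–Tenenbaum type estimate over a number field.)
Let `F` be a number field, and let `f` be a non-negative multiplicative function on the
nonzero ideals of `𝓞 F` with `f(𝓞 F) = 1`. If there are positive constants `A`, `B` with
`∑_{N(p) ≤ x} f(p) log N(p) ≤ A x` for all `x > 1` (sum over nonzero prime ideals) and
`∑_p ∑_{α ≥ 2} f(p^α) log N(p^α) / N(p^α) ≤ B`, then for all `x > 1`,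
`∑_{N(n) ≤ x} f(n) ≤ (A + B + 1) (x / log x) ∑_{N(n) ≤ x} f(n)/N(n)`. -/
theorem sum_multiplicative_le_of_prime_bounds
    (F : Type*) [Field F] [NumberField F]
    (f : Ideal (𝓞 F) → ℝ)
    (hf_nonneg : ∀ n : Ideal (𝓞 F), n ≠ ⊥ → 0 ≤ f n)
    (hf_one : f (1 : Ideal (𝓞 F)) = 1)
    (hf_mult : ∀ m n : Ideal (𝓞 F), m ≠ ⊥ → n ≠ ⊥ → IsCoprime m n →
      f (m * n) = f m * f n)
    (A B : ℝ) (hA : 0 < A) (hB : 0 < B)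
    (hApr : ∀ x : ℝ, 1 < x →
      (∑' p : {p : Ideal (𝓞 F) // p ≠ ⊥ ∧ p.IsPrime ∧ (Ideal.absNorm p : ℝ) ≤ x},
        f p.1 * Real.log (Ideal.absNorm p.1)) ≤ A * x)
    (hBsummable : Summable
      (fun q : {p : Ideal (𝓞 F) // p ≠ ⊥ ∧ p.IsPrime} × {α : ℕ // 2 ≤ α} =>
        f (q.1.1 ^ q.2.1) / (Ideal.absNorm (q.1.1 ^ q.2.1) : ℝ) *
          Real.log (Ideal.absNorm (q.1.1 ^ q.2.1))))
    (hBpr : (∑' q : {p : Ideal (𝓞 F) // p ≠ ⊥ ∧ p.IsPrime} × {α : ℕ // 2 ≤ α},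
        f (q.1.1 ^ q.2.1) / (Ideal.absNorm (q.1.1 ^ q.2.1) : ℝ) *
          Real.log (Ideal.absNorm (q.1.1 ^ q.2.1))) ≤ B) :
    ∀ x : ℝ, 1 < x →
      (∑' n : {n : Ideal (𝓞 F) // n ≠ ⊥ ∧ (Ideal.absNorm n : ℝ) ≤ x}, f n.1)
        ≤ (A + B + 1) * (x / Real.log x) *
          ∑' n : {n : Ideal (𝓞 F) // n ≠ ⊥ ∧ (Ideal.absNorm n : ℝ) ≤ x},
            f n.1 / (Ideal.absNorm n.1 : ℝ) := by
  classical
  intro x hx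
  have hxpos : (0 : ℝ) < x := lt_trans one_pos hx
  have hlogx : 0 < Real.log x := Real.log_pos hx
  -- basic norm facts
  have hNpos : ∀ {I : Ideal (𝓞 F)}, I ≠ ⊥ → 0 < (Ideal.absNorm I : ℝ) := by
    intro I hI
    exact_mod_cast Nat.pos_of_ne_zero (fun h => hI (Ideal.absNorm_eq_zero_iff.mp h))
  have hN1 : ∀ {I : Ideal (𝓞 F)}, I ≠ ⊥ → 1 ≤ (Ideal.absNorm I : ℝ) := by
    intro I hI
    exact_mod_cast Nat.pos_of_ne_zero (fun h => hI (Ideal.absNorm_eq_zero_iff.mp h))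
  have hlogN : ∀ {I : Ideal (𝓞 F)}, I ≠ ⊥ → 0 ≤ Real.log (Ideal.absNorm I) :=
    fun hI => Real.log_nonneg (hN1 hI)
  have hNp2 : ∀ {p : Ideal (𝓞 F)}, p ≠ ⊥ → p.IsPrime → 2 ≤ Ideal.absNorm p := by
    intro p hp hpr
    rcases Nat.lt_or_ge (Ideal.absNorm p) 2 with h | h
    · interval_cases h' : Ideal.absNorm p
      · exact absurd (Ideal.absNorm_eq_zero_iff.mp h') hp
      · exact absurd (Ideal.absNorm_eq_one_iff.mp h') hpr.ne_top
    · exact h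
  -- the finite set of ideals of norm at most x
  have hSfin : {n : Ideal (𝓞 F) | n ≠ ⊥ ∧ (Ideal.absNorm n : ℝ) ≤ x}.Finite := by
    apply (Ideal.finite_setOf_absNorm_le (S := 𝓞 F) ⌊x⌋₊).subset
    rintro I ⟨-, hIx⟩
    exact Nat.le_floor hIx
  set Sfin : Finset (Ideal (𝓞 F)) := hSfin.toFinset with hSfin_def
  have hmem : ∀ I : Ideal (𝓞 F), I ∈ Sfin ↔ I ≠ ⊥ ∧ (Ideal.absNorm I : ℝ) ≤ x := by
    intro I; simp [hSfin_def, Set.Finite.mem_toFinset]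
  set Tx : ℝ := ∑ n ∈ Sfin, f n / (Ideal.absNorm n : ℝ) with hTx_def
  have hTnn : 0 ≤ Tx := by
    refine Finset.sum_nonneg fun n hn => ?_
    exact div_nonneg (hf_nonneg n ((hmem n).mp hn).1) (Nat.cast_nonneg _)
  have hL : (∑' n : {n : Ideal (𝓞 F) // n ≠ ⊥ ∧ (Ideal.absNorm n : ℝ) ≤ x}, f n.1)
      = ∑ n ∈ Sfin, f n := tsum_set_finite_eq_sum hSfin f
  have hR : (∑' n : {n : Ideal (𝓞 F) // n ≠ ⊥ ∧ (Ideal.absNorm n : ℝ) ≤ x},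
      f n.1 / (Ideal.absNorm n.1 : ℝ)) = Tx :=
    tsum_set_finite_eq_sum hSfin (fun n => f n / (Ideal.absNorm n : ℝ))
  rw [hL, hR]
  -- first piece: sum of f n * log (x / N n)
  have bound1 : ∑ n ∈ Sfin, f n * Real.log (x / (Ideal.absNorm n : ℝ)) ≤ x * Tx := by
    rw [hTx_def, Finset.mul_sum]
    refine Finset.sum_le_sum fun n hn => ?_
    obtain ⟨hnb, hnx⟩ := (hmem n).mp hn
    calc f n * Real.log (x / (Ideal.absNorm n : ℝ))
        ≤ f n * (x / (Ideal.absNorm n : ℝ)) := by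
          refine mul_le_mul_of_nonneg_left ?_ (hf_nonneg n hnb)
          exact Real.log_le_self (by positivity)
      _ = x * (f n / (Ideal.absNorm n : ℝ)) := by ring
  -- main piece
  have bound2 : ∑ n ∈ Sfin, f n * Real.log (Ideal.absNorm n : ℝ)
      ≤ A * (x * Tx) + B * (x * Tx) := by
    have hid : ∑ n ∈ Sfin, f n * Real.log (Ideal.absNorm n : ℝ)
        = ∑ σ ∈ Sfin.sigma (fun n => (normalizedFactors n).toFinset),
            f (σ.2 ^ (normalizedFactors σ.1).count σ.2) * f (copart σ.1 σ.2) *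
              Real.log (Ideal.absNorm (σ.2 ^ (normalizedFactors σ.1).count σ.2)) := by
      rw [Finset.sum_sigma]
      exact Finset.sum_congr rfl fun n hn => key_identity f hf_mult ((hmem n).mp hn).1
    rw [hid]
    set t : (Σ _ : Ideal (𝓞 F), Ideal (𝓞 F)) → ℝ := fun σ =>
      f (σ.2 ^ (normalizedFactors σ.1).count σ.2) * f (copart σ.1 σ.2) *
        Real.log (Ideal.absNorm (σ.2 ^ (normalizedFactors σ.1).count σ.2)) with ht
    set Ss := Sfin.sigma (fun n => (normalizedFactors n).toFinset) with hSs
    -- basic facts about members of Ss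
    have hσfacts : ∀ σ ∈ Ss, σ.1 ≠ ⊥ ∧ (Ideal.absNorm σ.1 : ℝ) ≤ x ∧ σ.2.IsPrime ∧ σ.2 ≠ ⊥ ∧
        1 ≤ (normalizedFactors σ.1).count σ.2 ∧
        σ.1 = σ.2 ^ (normalizedFactors σ.1).count σ.2 * copart σ.1 σ.2 ∧
        copart σ.1 σ.2 ≠ ⊥ ∧ σ.2 ∈ Sfin ∧ copart σ.1 σ.2 ∈ Sfin := by
      rintro ⟨n, p⟩ hσ
      obtain ⟨hn, hp⟩ := Finset.mem_sigma.mp hσ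
      obtain ⟨hnb, hnx⟩ := (hmem n).mp hn
      have hpmem : p ∈ normalizedFactors n := Multiset.mem_toFinset.mp hp
      have hppr : Prime p := prime_of_normalized_factor p hpmem
      have hpb : p ≠ ⊥ := hppr.ne_zero
      have hc1 : 1 ≤ (normalizedFactors n).count p := Multiset.one_le_count_iff_mem.mpr hpmem
      have hdec : n = p ^ (normalizedFactors n).count p * copart n p := copart_mul hnb p
      have hmb : copart n p ≠ ⊥ := copart_ne_bot hnb p
      have hns : (Ideal.absNorm n : ℝ)
          = (Ideal.absNorm (p ^ (normalizedFactors n).count p) : ℝ) *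
            (Ideal.absNorm (copart n p) : ℝ) := by
        rw [← Nat.cast_mul, ← map_mul, ← hdec]
      have hpowb : p ^ (normalizedFactors n).count p ≠ ⊥ := pow_ne_zero _ hpb
      have h1 : (Ideal.absNorm p : ℝ) ≤ (Ideal.absNorm (p ^ (normalizedFactors n).count p) : ℝ) := by
        rw [map_pow, Nat.cast_pow]
        exact le_self_pow₀ (hN1 hpb) (by omega)
      have hNmx : (Ideal.absNorm (copart n p) : ℝ) ≤ x := by
        nlinarith [hN1 hpowb, hNpos hmb]
      have hNpx : (Ideal.absNorm p : ℝ) ≤ x := by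
        nlinarith [hN1 hmb, hNpos hpowb, hNpos hpb]
      exact ⟨hnb, hnx, Ideal.isPrime_of_prime hppr, hpb, hc1, hdec, hmb,
        (hmem p).mpr ⟨hpb, hNpx⟩, (hmem _).mpr ⟨hmb, hNmx⟩⟩
    have hnormsplit : ∀ σ ∈ Ss, (Ideal.absNorm σ.1 : ℝ)
        = (Ideal.absNorm (σ.2 ^ (normalizedFactors σ.1).count σ.2) : ℝ) *
          (Ideal.absNorm (copart σ.1 σ.2) : ℝ) := by
      intro σ hσ
      obtain ⟨-, -, -, -, -, hdec, -⟩ := hσfacts σ hσ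
      rw [← Nat.cast_mul, ← map_mul, ← hdec]
    rw [← Finset.sum_filter_add_sum_filter_not Ss
      (fun σ => (normalizedFactors σ.1).count σ.2 = 1) t]
    have hbA : ∑ σ ∈ Ss.filter (fun σ => (normalizedFactors σ.1).count σ.2 = 1), t σ
        ≤ A * (x * Tx) := by
      set T1 := Sfin.sigma (fun m => Sfin.filter (fun p => p.IsPrime ∧
        (Ideal.absNorm p : ℝ) * (Ideal.absNorm m : ℝ) ≤ x)) with hT1
      have step : ∑ σ ∈ Ss.filter (fun σ => (normalizedFactors σ.1).count σ.2 = 1), t σ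
          ≤ ∑ σ ∈ T1, f σ.2 * f σ.1 * Real.log (Ideal.absNorm σ.2 : ℝ) := by
        refine sum_le_sum_map _ _ _ _ (fun σ => ⟨copart σ.1 σ.2, σ.2⟩) ?_ ?_ ?_ ?_
        · rintro ⟨n, p⟩ hσ
          obtain ⟨hσs, hc1⟩ := Finset.mem_filter.mp hσ
          obtain ⟨hnb, hnx, hpr, hpb, -, hdec, hmb, hpS, hmS⟩ := hσfacts _ hσs
          have hns := hnormsplit _ hσs
          simp only [hc1, pow_one] at hns
          rw [hT1, Finset.mem_sigma]
          exact ⟨hmS, Finset.mem_filter.mpr ⟨hpS, hpr, by rw [← hns]; exact hnx⟩⟩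
        · rintro ⟨n, p⟩ hσ ⟨n', p'⟩ hσ' heq
          obtain ⟨hσs, hc1⟩ := Finset.mem_filter.mp (Finset.mem_coe.mp hσ)
          obtain ⟨hσs', hc1'⟩ := Finset.mem_filter.mp (Finset.mem_coe.mp hσ')
          obtain ⟨-, -, -, -, -, hdec, -, -, -⟩ := hσfacts _ hσs
          obtain ⟨-, -, -, -, -, hdec', -, -, -⟩ := hσfacts _ hσs'
          obtain ⟨h1, h2⟩ := Sigma.mk.inj_iff.mp heq
          have h2' : p = p' := eq_of_heq h2
          dsimp only at hdec hdec' hc1 hc1' h1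
          have hn : n = n' := by
            rw [hdec, hdec', hc1, hc1', h1, h2']
          subst hn; subst h2'; rfl
        · rintro ⟨n, p⟩ hσ
          obtain ⟨hσs, hc1⟩ := Finset.mem_filter.mp hσ
          simp only at hc1
          simp only [ht, hc1, pow_one]
        · rintro ⟨m, p⟩ hb
          obtain ⟨hmS, hpf⟩ := Finset.mem_sigma.mp hb
          obtain ⟨hpS, -, -⟩ := Finset.mem_filter.mp hpf
          exact mul_nonneg (mul_nonneg (hf_nonneg _ ((hmem p).mp hpS).1)
            (hf_nonneg _ ((hmem m).mp hmS).1)) (hlogN ((hmem p).mp hpS).1)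
      refine step.trans ?_
      rw [hT1, Finset.sum_sigma]
      have hinner : ∀ m ∈ Sfin, ∑ p ∈ Sfin.filter (fun p => p.IsPrime ∧
          (Ideal.absNorm p : ℝ) * (Ideal.absNorm m : ℝ) ≤ x),
            f p * Real.log (Ideal.absNorm p)
          ≤ A * (x / (Ideal.absNorm m : ℝ)) := by
        intro m hm
        obtain ⟨hmb, -⟩ := (hmem m).mp hm
        have hNm := hNpos hmb
        by_cases hy : 1 < x / (Ideal.absNorm m : ℝ)
        · have hPfin : {p : Ideal (𝓞 F) | p ≠ ⊥ ∧ p.IsPrime ∧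
              (Ideal.absNorm p : ℝ) ≤ x / (Ideal.absNorm m : ℝ)}.Finite := by
            apply (Ideal.finite_setOf_absNorm_le (S := 𝓞 F) ⌊x / (Ideal.absNorm m : ℝ)⌋₊).subset
            rintro I ⟨-, -, hIx⟩
            exact Nat.le_floor hIx
          have h1 : ∑ p ∈ hPfin.toFinset, f p * Real.log (Ideal.absNorm p)
              ≤ A * (x / (Ideal.absNorm m : ℝ)) := by
            rw [← tsum_set_finite_eq_sum hPfin (fun p => f p * Real.log (Ideal.absNorm p))]
            exact hApr _ hy
          refine le_trans (Finset.sum_le_sum_of_subset_of_nonneg ?_ ?_) h1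
          · intro p hp
            obtain ⟨hps, hppr, hpx⟩ := Finset.mem_filter.mp hp
            exact hPfin.mem_toFinset.mpr ⟨((hmem p).mp hps).1, hppr, (le_div_iff₀ hNm).mpr hpx⟩
          · intro p hp _
            obtain ⟨hpb, -, -⟩ := hPfin.mem_toFinset.mp hp
            exact mul_nonneg (hf_nonneg p hpb) (hlogN hpb)
        · push_neg at hy
          have hempty : Sfin.filter (fun p => p.IsPrime ∧
              (Ideal.absNorm p : ℝ) * (Ideal.absNorm m : ℝ) ≤ x) = ∅ := by
            refine Finset.eq_empty_of_forall_notMem fun p hp => ?_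
            obtain ⟨hps, hppr, hpx⟩ := Finset.mem_filter.mp hp
            obtain ⟨hpb, -⟩ := (hmem p).mp hps
            have h2 : (2 : ℝ) ≤ (Ideal.absNorm p : ℝ) := by exact_mod_cast hNp2 hpb hppr
            have h3 : (Ideal.absNorm p : ℝ) ≤ x / (Ideal.absNorm m : ℝ) :=
              (le_div_iff₀ hNm).mpr hpx
            linarith
          rw [hempty, Finset.sum_empty]
          exact le_of_lt (mul_pos hA (div_pos hxpos hNm))
      calc ∑ m ∈ Sfin, ∑ p ∈ Sfin.filter (fun p => p.IsPrime ∧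
            (Ideal.absNorm p : ℝ) * (Ideal.absNorm m : ℝ) ≤ x),
            f p * f m * Real.log (Ideal.absNorm p : ℝ)
          ≤ ∑ m ∈ Sfin, A * x * (f m / (Ideal.absNorm m : ℝ)) := by
            refine Finset.sum_le_sum fun m hm => ?_
            obtain ⟨hmb, -⟩ := (hmem m).mp hm
            have : ∑ p ∈ Sfin.filter (fun p => p.IsPrime ∧
                (Ideal.absNorm p : ℝ) * (Ideal.absNorm m : ℝ) ≤ x),
                f p * f m * Real.log (Ideal.absNorm p : ℝ)
                = f m * ∑ p ∈ Sfin.filter (fun p => p.IsPrime ∧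
                  (Ideal.absNorm p : ℝ) * (Ideal.absNorm m : ℝ) ≤ x),
                  f p * Real.log (Ideal.absNorm p : ℝ) := by
              rw [Finset.mul_sum]
              exact Finset.sum_congr rfl fun p _ => by ring
            rw [this]
            calc f m * ∑ p ∈ Sfin.filter (fun p => p.IsPrime ∧
                  (Ideal.absNorm p : ℝ) * (Ideal.absNorm m : ℝ) ≤ x),
                  f p * Real.log (Ideal.absNorm p : ℝ)
                ≤ f m * (A * (x / (Ideal.absNorm m : ℝ))) :=
                  mul_le_mul_of_nonneg_left (hinner m hm) (hf_nonneg m hmb)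
              _ = A * x * (f m / (Ideal.absNorm m : ℝ)) := by ring
        _ = A * (x * Tx) := by
            rw [hTx_def]
            simp only [Finset.mul_sum]
            exact Finset.sum_congr rfl fun m _ => by ring
    have hbB : ∑ σ ∈ Ss.filter (fun σ => ¬ (normalizedFactors σ.1).count σ.2 = 1), t σ
        ≤ B * (x * Tx) := by
      set PA := (Sfin ×ˢ Finset.range (⌊x⌋₊ + 1)).filter
        (fun q => q.1.IsPrime ∧ 2 ≤ q.2) with hPA
      set T2 := PA.sigma (fun q => Sfin.filter (fun m =>
        (Ideal.absNorm (q.1 ^ q.2) : ℝ) * (Ideal.absNorm m : ℝ) ≤ x)) with hT2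
      have step : ∑ σ ∈ Ss.filter (fun σ => ¬ (normalizedFactors σ.1).count σ.2 = 1), t σ
          ≤ ∑ σ ∈ T2, f (σ.1.1 ^ σ.1.2) * f σ.2 *
              Real.log (Ideal.absNorm (σ.1.1 ^ σ.1.2) : ℝ) := by
        refine sum_le_sum_map _ _ _ _
          (fun σ => ⟨(σ.2, (normalizedFactors σ.1).count σ.2), copart σ.1 σ.2⟩) ?_ ?_ ?_ ?_
        · rintro ⟨n, p⟩ hσ
          obtain ⟨hσs, hc⟩ := Finset.mem_filter.mp hσ
          obtain ⟨hnb, hnx, hpr, hpb, hc1, hdec, hmb, hpS, hmS⟩ := hσfacts _ hσs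
          have hns := hnormsplit _ hσs
          dsimp only at hc hc1 hdec hns ⊢
          have hc2 : 2 ≤ (normalizedFactors n).count p := by omega
          have hcnt_le : (normalizedFactors n).count p < ⌊x⌋₊ + 1 := by
            have hk1 : (normalizedFactors n).count p < 2 ^ (normalizedFactors n).count p :=
              Nat.lt_two_pow_self
            have hk2 : 2 ^ (normalizedFactors n).count p
                ≤ Ideal.absNorm p ^ (normalizedFactors n).count p :=
              Nat.pow_le_pow_left (hNp2 hpb hpr) _
            have hk3 : ((Ideal.absNorm p : ℝ)) ^ (normalizedFactors n).count p
                = (Ideal.absNorm (p ^ (normalizedFactors n).count p) : ℝ) := by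
              rw [map_pow, Nat.cast_pow]
            have hk4 : ((normalizedFactors n).count p : ℝ) ≤ x := by
              have h5 : (((normalizedFactors n).count p : ℕ) : ℝ)
                  < ((Ideal.absNorm p ^ (normalizedFactors n).count p : ℕ) : ℝ) := by
                exact_mod_cast lt_of_lt_of_le hk1 hk2
              rw [Nat.cast_pow, hk3] at h5
              nlinarith [hN1 hmb, hNpos (pow_ne_zero ((normalizedFactors n).count p) hpb)]
            exact Nat.lt_succ_of_le (Nat.le_floor hk4)
          rw [hT2, Finset.mem_sigma, hPA]
          refine ⟨Finset.mem_filter.mpr ⟨Finset.mem_product.mpr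
            ⟨hpS, Finset.mem_range.mpr hcnt_le⟩, hpr, hc2⟩, ?_⟩
          exact Finset.mem_filter.mpr ⟨hmS, by rw [← hns]; exact hnx⟩
        · rintro ⟨n, p⟩ hσ ⟨n', p'⟩ hσ' heq
          obtain ⟨hσs, -⟩ := Finset.mem_filter.mp (Finset.mem_coe.mp hσ)
          obtain ⟨hσs', -⟩ := Finset.mem_filter.mp (Finset.mem_coe.mp hσ')
          obtain ⟨-, -, -, -, -, hdec, -, -, -⟩ := hσfacts _ hσs
          obtain ⟨-, -, -, -, -, hdec', -, -, -⟩ := hσfacts _ hσs'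
          obtain ⟨h1, h2⟩ := Sigma.mk.inj_iff.mp heq
          have hp_eq := congrArg Prod.fst h1
          have hcnt_eq := congrArg Prod.snd h1
          have h2' : copart n p = copart n' p' := eq_of_heq h2
          dsimp only at hdec hdec' hp_eq hcnt_eq
          subst hp_eq
          have hn : n = n' := by rw [hdec, hdec', hcnt_eq, h2']
          subst hn
          rfl
        · rintro ⟨n, p⟩ hσ
          rfl
        · rintro ⟨⟨p, a⟩, m⟩ hb
          obtain ⟨hqPA, hmf⟩ := Finset.mem_sigma.mp hb
          obtain ⟨hqprod, -, -⟩ := Finset.mem_filter.mp hqPA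
          obtain ⟨hpS, -⟩ := Finset.mem_product.mp hqprod
          obtain ⟨hmS, -⟩ := Finset.mem_filter.mp hmf
          have hpb : p ≠ ⊥ := ((hmem p).mp hpS).1
          have hpow : p ^ a ≠ ⊥ := pow_ne_zero _ hpb
          exact mul_nonneg (mul_nonneg (hf_nonneg _ hpow)
            (hf_nonneg _ ((hmem m).mp hmS).1)) (hlogN hpow)
      refine step.trans ?_
      rw [hT2, Finset.sum_sigma]
      have hxT : 0 ≤ x * Tx := mul_nonneg (le_of_lt hxpos) hTnn
      have hPAsum : ∑ q ∈ PA, f (q.1 ^ q.2) / (Ideal.absNorm (q.1 ^ q.2) : ℝ) *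
          Real.log (Ideal.absNorm (q.1 ^ q.2) : ℝ) ≤ B := by
        refine le_trans ?_ hBpr
        rw [← Finset.sum_attach PA (fun q => f (q.1 ^ q.2) / (Ideal.absNorm (q.1 ^ q.2) : ℝ) *
          Real.log (Ideal.absNorm (q.1 ^ q.2) : ℝ))]
        refine sum_le_tsum_map _ _ _ ?_ hBsummable
          (fun a => (⟨a.1.1, ((hmem a.1.1).mp
              (Finset.mem_product.mp (Finset.mem_filter.mp a.2).1).1).1,
              (Finset.mem_filter.mp a.2).2.1⟩,
            ⟨a.1.2, (Finset.mem_filter.mp a.2).2.2⟩)) ?_ ?_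
        · rintro ⟨⟨p, hpb, hppr⟩, ⟨a, ha⟩⟩
          have hpow : p ^ a ≠ ⊥ := pow_ne_zero _ hpb
          exact mul_nonneg (div_nonneg (hf_nonneg _ hpow) (Nat.cast_nonneg _)) (hlogN hpow)
        · intro a _ a' _ heq
          obtain ⟨h1, h2⟩ := Prod.ext_iff.mp heq
          apply Subtype.ext
          exact Prod.ext (congrArg Subtype.val h1) (congrArg Subtype.val h2)
        · intro a _
          rfl
      calc ∑ q ∈ PA, ∑ m ∈ Sfin.filter (fun m =>
            (Ideal.absNorm (q.1 ^ q.2) : ℝ) * (Ideal.absNorm m : ℝ) ≤ x),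
            f (q.1 ^ q.2) * f m * Real.log (Ideal.absNorm (q.1 ^ q.2) : ℝ)
          ≤ ∑ q ∈ PA, (x * Tx) * (f (q.1 ^ q.2) / (Ideal.absNorm (q.1 ^ q.2) : ℝ) *
              Real.log (Ideal.absNorm (q.1 ^ q.2) : ℝ)) := by
            refine Finset.sum_le_sum fun q hq => ?_
            obtain ⟨hqprod, -, -⟩ := Finset.mem_filter.mp hq
            obtain ⟨hpS, -⟩ := Finset.mem_product.mp hqprod
            have hpb : q.1 ≠ ⊥ := ((hmem q.1).mp hpS).1
            have hpow : q.1 ^ q.2 ≠ ⊥ := pow_ne_zero _ hpb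
            have hNpow : 0 < (Ideal.absNorm (q.1 ^ q.2) : ℝ) := hNpos hpow
            have hfm : ∑ m ∈ Sfin.filter (fun m =>
                (Ideal.absNorm (q.1 ^ q.2) : ℝ) * (Ideal.absNorm m : ℝ) ≤ x), f m
                ≤ (x / (Ideal.absNorm (q.1 ^ q.2) : ℝ)) * Tx := by
              calc ∑ m ∈ Sfin.filter (fun m =>
                  (Ideal.absNorm (q.1 ^ q.2) : ℝ) * (Ideal.absNorm m : ℝ) ≤ x), f m
                  ≤ ∑ m ∈ Sfin.filter (fun m =>
                    (Ideal.absNorm (q.1 ^ q.2) : ℝ) * (Ideal.absNorm m : ℝ) ≤ x),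
                      (x / (Ideal.absNorm (q.1 ^ q.2) : ℝ)) * (f m / (Ideal.absNorm m : ℝ)) := by
                    refine Finset.sum_le_sum fun m hm => ?_
                    obtain ⟨hmS, hmx⟩ := Finset.mem_filter.mp hm
                    have hmb : m ≠ ⊥ := ((hmem m).mp hmS).1
                    have hNm : 0 < (Ideal.absNorm m : ℝ) := hNpos hmb
                    have hle : (Ideal.absNorm m : ℝ) ≤ x / (Ideal.absNorm (q.1 ^ q.2) : ℝ) :=
                      (le_div_iff₀ hNpow).mpr (by rw [mul_comm]; exact hmx)
                    calc f m = (f m / (Ideal.absNorm m : ℝ)) * (Ideal.absNorm m : ℝ) :=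
                        (div_mul_cancel₀ _ (ne_of_gt hNm)).symm
                      _ ≤ (f m / (Ideal.absNorm m : ℝ)) *
                          (x / (Ideal.absNorm (q.1 ^ q.2) : ℝ)) :=
                        mul_le_mul_of_nonneg_left hle
                          (div_nonneg (hf_nonneg m hmb) (le_of_lt hNm))
                      _ = (x / (Ideal.absNorm (q.1 ^ q.2) : ℝ)) *
                          (f m / (Ideal.absNorm m : ℝ)) := mul_comm _ _
                _ ≤ ∑ m ∈ Sfin, (x / (Ideal.absNorm (q.1 ^ q.2) : ℝ)) *
                      (f m / (Ideal.absNorm m : ℝ)) := by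
                    refine Finset.sum_le_sum_of_subset_of_nonneg (Finset.filter_subset _ _)
                      fun m hm _ => ?_
                    have hmb : m ≠ ⊥ := ((hmem m).mp hm).1
                    exact mul_nonneg (div_nonneg (le_of_lt hxpos) (le_of_lt hNpow))
                      (div_nonneg (hf_nonneg m hmb) (Nat.cast_nonneg _))
                _ = (x / (Ideal.absNorm (q.1 ^ q.2) : ℝ)) * Tx := by
                    rw [hTx_def, Finset.mul_sum]
            have hfactor : ∑ m ∈ Sfin.filter (fun m =>
                (Ideal.absNorm (q.1 ^ q.2) : ℝ) * (Ideal.absNorm m : ℝ) ≤ x),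
                f (q.1 ^ q.2) * f m * Real.log (Ideal.absNorm (q.1 ^ q.2) : ℝ)
                = (f (q.1 ^ q.2) * Real.log (Ideal.absNorm (q.1 ^ q.2) : ℝ)) *
                  ∑ m ∈ Sfin.filter (fun m =>
                    (Ideal.absNorm (q.1 ^ q.2) : ℝ) * (Ideal.absNorm m : ℝ) ≤ x), f m := by
              rw [Finset.mul_sum]
              exact Finset.sum_congr rfl fun m _ => by ring
            rw [hfactor]
            calc (f (q.1 ^ q.2) * Real.log (Ideal.absNorm (q.1 ^ q.2) : ℝ)) *
                  ∑ m ∈ Sfin.filter (fun m =>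
                    (Ideal.absNorm (q.1 ^ q.2) : ℝ) * (Ideal.absNorm m : ℝ) ≤ x), f m
                ≤ (f (q.1 ^ q.2) * Real.log (Ideal.absNorm (q.1 ^ q.2) : ℝ)) *
                  ((x / (Ideal.absNorm (q.1 ^ q.2) : ℝ)) * Tx) :=
                  mul_le_mul_of_nonneg_left hfm
                    (mul_nonneg (hf_nonneg _ hpow) (hlogN hpow))
              _ = (x * Tx) * (f (q.1 ^ q.2) / (Ideal.absNorm (q.1 ^ q.2) : ℝ) *
                  Real.log (Ideal.absNorm (q.1 ^ q.2) : ℝ)) := by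
                  field_simp
        _ = (x * Tx) * ∑ q ∈ PA, (f (q.1 ^ q.2) / (Ideal.absNorm (q.1 ^ q.2) : ℝ) *
              Real.log (Ideal.absNorm (q.1 ^ q.2) : ℝ)) := (Finset.mul_sum _ _ _).symm
        _ ≤ (x * Tx) * B := mul_le_mul_of_nonneg_left hPAsum hxT
        _ = B * (x * Tx) := mul_comm _ _
    exact add_le_add hbA hbB
  -- combine
  have key : (∑ n ∈ Sfin, f n) * Real.log x ≤ (A + B + 1) * (x * Tx) := by
    have hsplit : (∑ n ∈ Sfin, f n) * Real.log x
        = (∑ n ∈ Sfin, f n * Real.log (x / (Ideal.absNorm n : ℝ)))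
          + ∑ n ∈ Sfin, f n * Real.log (Ideal.absNorm n : ℝ) := by
      rw [Finset.sum_mul, ← Finset.sum_add_distrib]
      refine Finset.sum_congr rfl fun n hn => ?_
      obtain ⟨hnb, -⟩ := (hmem n).mp hn
      rw [Real.log_div (ne_of_gt hxpos) (ne_of_gt (hNpos hnb))]
      ring
    rw [hsplit]
    calc (∑ n ∈ Sfin, f n * Real.log (x / (Ideal.absNorm n : ℝ)))
          + ∑ n ∈ Sfin, f n * Real.log (Ideal.absNorm n : ℝ)
        ≤ x * Tx + (A * (x * Tx) + B * (x * Tx)) := add_le_add bound1 bound2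
      _ = (A + B + 1) * (x * Tx) := by ring
  calc ∑ n ∈ Sfin, f n = ((∑ n ∈ Sfin, f n) * Real.log x) / Real.log x := by
        field_simp
    _ ≤ ((A + B + 1) * (x * Tx)) / Real.log x := by
        gcongr
    _ = (A + B + 1) * (x / Real.log x) * Tx := by ring
end

section
/- Let $\theta$ be a real number such that $\theta/(2\pi)$ is irrational. Then there exist infinitely many positive integers $n$ such that $0 < |\sin((n+1)\theta)| \le \dfrac{2\pi}{n+1}$. -/
open Real Set

/-- sin(kθ) ≠ 0 for k ≥ 1 when θ/(2π) is irrational. -/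
lemma sin_ne_zero_of_irr (θ : ℝ) (h : Irrational (θ / (2 * Real.pi)))
    (k : ℕ) (hk : 0 < k) : Real.sin (k * θ) ≠ 0 := by
  intro h0
  obtain ⟨m, hm⟩ := Real.sin_eq_zero_iff.mp h0
  have hπ := Real.pi_pos
  have : (θ / (2 * Real.pi)) = (m : ℝ) / (2 * k) := by
    field_simp
    nlinarith [hm]
  have : Irrational ((m : ℝ) / (2 * k)) := this ▸ h
  have : Irrational (((m : ℚ) / (2 * k) : ℚ) : ℝ) := by
    push_cast
    exact this
  exact (Rat.not_irrational _) this

/-- finiteness of good approximations with bounded denominator -/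
lemma finite_bdd_den (ξ : ℝ) (D : ℕ) :
    {q : ℚ | |ξ - (q : ℝ)| < 1 / (q.den : ℝ) ^ 2 ∧ q.den ≤ D}.Finite := by
  set M : ℤ := ⌈|ξ| + 1⌉ * D
  have hsub : {q : ℚ | |ξ - (q : ℝ)| < 1 / (q.den : ℝ) ^ 2 ∧ q.den ≤ D} ⊆
      (fun q : ℚ => (q.num, q.den)) ⁻¹' (Set.Icc (-M) M ×ˢ Set.Icc 0 D) := by
    rintro q ⟨h1, h2⟩
    have hden : (0 : ℝ) < q.den := by exact_mod_cast q.pos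
    have hden1 : (1 : ℝ) ≤ q.den := by exact_mod_cast q.pos
    have h1' : |ξ - (q : ℝ)| < 1 := lt_of_lt_of_le h1 (by
      rw [div_le_one (by positivity)]
      nlinarith)
    have hq : |(q : ℝ)| ≤ |ξ| + 1 := by
      have := abs_sub_abs_le_abs_sub (q : ℝ) ξ
      rw [abs_sub_comm] at h1'
      linarith
    have hnumeq : (q.num : ℝ) = (q : ℝ) * q.den := by
      rw [Rat.cast_def]; field_simp
    have hnum : |(q.num : ℝ)| ≤ (|ξ| + 1) * q.den := by
      rw [hnumeq, abs_mul, abs_of_pos hden]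
      exact mul_le_mul_of_nonneg_right hq hden.le
    have hnum' : |(q.num : ℝ)| ≤ (M : ℝ) := by
      have hD : (q.den : ℝ) ≤ D := by exact_mod_cast h2
      have h3 : (|ξ| + 1) * q.den ≤ (⌈|ξ| + 1⌉ : ℝ) * D := by
        apply mul_le_mul (Int.le_ceil _) hD hden.le
        positivity
      have hM : ((M : ℤ) : ℝ) = (⌈|ξ| + 1⌉ : ℝ) * (D : ℝ) := by
        simp [M]
      rw [hM]
      exact le_trans hnum h3
    have : |q.num| ≤ M := by exact_mod_cast hnum'
    exact ⟨abs_le.mp this, Nat.zero_le _, h2⟩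
  refine Set.Finite.subset (Set.Finite.preimage ?_ ((Set.finite_Icc _ _).prod (Set.finite_Icc _ _))) hsub
  intro a _ b _ hab
  exact Rat.ext (congrArg Prod.fst hab) (congrArg Prod.snd hab)

/-- If `θ/(2π)` is irrational, then there are infinitely many positive
integers `n` with `0 < |sin ((n+1) θ)| ≤ 2π/(n+1)`. -/
theorem infinitely_many_small_sin_values
    (θ : ℝ) (h : Irrational (θ / (2 * Real.pi))) :
    {n : ℕ | 0 < n ∧ 0 < |Real.sin ((n + 1) * θ)| ∧
      |Real.sin ((n + 1) * θ)| ≤ 2 * Real.pi / (n + 1)}.Infinite := by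
  have hπ := Real.pi_pos
  set ξ := θ / (2 * Real.pi) with hξdef
  have hθ : θ = 2 * Real.pi * ξ := by
    rw [hξdef, mul_div_assoc', mul_div_cancel_left₀ _ (by positivity : (2 * Real.pi) ≠ 0)]
  apply Set.infinite_of_not_bddAbove
  rintro ⟨m, hm⟩
  -- find a good approximation with denominator > m + 1
  have hinf := Real.infinite_rat_abs_sub_lt_one_div_den_sq_of_irrational h
  have hfin := finite_bdd_den ξ (m + 1)
  obtain ⟨q, hq, hqd⟩ : ∃ q : ℚ, |ξ - (q : ℝ)| < 1 / (q.den : ℝ) ^ 2 ∧ ¬ q.den ≤ m + 1 := by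
    have := (hinf.diff hfin).nonempty
    obtain ⟨q, hq⟩ := this
    exact ⟨q, hq.1, fun hd => hq.2 ⟨hq.1, hd⟩⟩
  push_neg at hqd
  set n := q.den - 1 with hn
  have hden1 : 1 ≤ q.den := q.pos
  have hnd : (n : ℕ) + 1 = q.den := by omega
  have hmn : m < n := by omega
  have hkpos : (0 : ℝ) < (n : ℝ) + 1 := by positivity
  have hcast : ((n : ℝ) + 1) = (q.den : ℝ) := by exact_mod_cast hnd
  -- key estimate
  have happrox : |(q.den : ℝ) * ξ - (q.num : ℝ)| ≤ 1 / (q.den : ℝ) := by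
    have hdpos : (0 : ℝ) < (q.den : ℝ) := by exact_mod_cast q.pos
    have : |(q.den : ℝ) * ξ - (q.num : ℝ)| = (q.den : ℝ) * |ξ - (q : ℝ)| := by
      rw [← abs_of_pos hdpos, ← abs_mul]
      congr 1
      rw [Rat.cast_def]
      field_simp
      rw [abs_of_pos hdpos]; ring
    rw [this]
    have := hq.le
    calc (q.den : ℝ) * |ξ - (q : ℝ)| ≤ (q.den : ℝ) * (1 / (q.den : ℝ) ^ 2) := by
          exact mul_le_mul_of_nonneg_left this hdpos.le
      _ = 1 / (q.den : ℝ) := by field_simp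
  have hkey : |Real.sin (((n : ℝ) + 1) * θ)| ≤ 2 * Real.pi / ((n : ℝ) + 1) := by
    have hsin : Real.sin (((n : ℝ) + 1) * θ)
        = Real.sin (((n : ℝ) + 1) * θ - q.num * (2 * Real.pi)) :=
      (Real.sin_sub_int_mul_two_pi _ q.num).symm
    rw [hsin]
    refine le_trans Real.abs_sin_le_abs ?_
    have heq : ((n : ℝ) + 1) * θ - q.num * (2 * Real.pi)
        = 2 * Real.pi * ((q.den : ℝ) * ξ - q.num) := by
      rw [hθ, hcast]; ring
    rw [heq, abs_mul, abs_of_pos (by positivity : (0:ℝ) < 2 * Real.pi), hcast,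
      div_eq_mul_one_div]
    exact mul_le_mul_of_nonneg_left happrox (by positivity)
  have hne : Real.sin (((n : ℝ) + 1) * θ) ≠ 0 := by
    have := sin_ne_zero_of_irr θ h (n + 1) (Nat.succ_pos n)
    simpa [Nat.cast_add] using this
  have hmem : n ∈ {n : ℕ | 0 < n ∧ 0 < |Real.sin ((n + 1) * θ)| ∧
      |Real.sin ((n + 1) * θ)| ≤ 2 * Real.pi / (n + 1)} :=
    ⟨by omega, abs_pos.mpr hne, hkey⟩
  exact absurd (hm hmem) (not_le.mpr hmn)
end

section
/- Define $I(\gamma) = \dfrac{2}{\pi} \int_{0}^{\pi} |2\cos\theta|^{\gamma} \sin^{2}\theta\, d\theta$ for $\gamma \ge 0$. Then $I(2) = 1$, and there exists an absolute constant $c > 0$ such that for all $\gamma \in (0,1)$ one has $I(\gamma) \le 1 - \dfrac{\gamma}{2} + c\,\gamma^{2}$. -/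
open Real MeasureTheory intervalIntegral Filter Topology Set



lemma log_mul_quarter_lt (t : ℝ) (h0 : 0 < t) (h1 : t ≤ 1) :
    |Real.log t| * t ^ ((1:ℝ)/4) < 4 := by
  have hu : 0 < t ^ ((1:ℝ)/4) := Real.rpow_pos_of_pos h0 _
  have hu1 : t ^ ((1:ℝ)/4) ≤ 1 := Real.rpow_le_one h0.le h1 (by norm_num)
  have := Real.abs_log_mul_self_lt (t ^ ((1:ℝ)/4)) hu hu1
  rw [Real.log_rpow h0] at this
  rw [abs_mul, abs_of_pos hu] at this
  have habs : |(1:ℝ)/4 * Real.log t| = 1/4 * |Real.log t| := by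
    rw [abs_mul]; norm_num
  rw [habs] at this
  nlinarith [abs_nonneg (Real.log t)]

lemma two_rpow_half_bounds : (1:ℝ)/2 ≤ (2:ℝ) ^ (-(1:ℝ)/2) := by
  have e : (2:ℝ) ^ (-(1:ℝ)/2) = ((2:ℝ) ^ ((1:ℝ)/2))⁻¹ := by
    rw [← Real.rpow_neg (by norm_num : (0:ℝ) ≤ 2)]; norm_num
  have hb : (2:ℝ) ^ ((1:ℝ)/2) ≤ 2 := by
    calc (2:ℝ) ^ ((1:ℝ)/2) ≤ 2 ^ (1:ℝ) :=
      Real.rpow_le_rpow_of_exponent_le (by norm_num) (by norm_num)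
      _ = 2 := Real.rpow_one 2
  have hpos : (0:ℝ) < (2:ℝ) ^ ((1:ℝ)/2) := Real.rpow_pos_of_pos (by norm_num) _
  rw [e]
  have h1 := mul_inv_cancel₀ hpos.ne'
  nlinarith [inv_nonneg.mpr hpos.le]

lemma log_sq_le_inv_sqrt (t : ℝ) (h0 : 0 ≤ t) (h2 : t ≤ 2) :
    (Real.log t) ^ 2 ≤ 16 * t ^ (-(1:ℝ)/2) := by
  rcases eq_or_lt_of_le h0 with h | h
  · rw [← h]; simp [Real.zero_rpow (by norm_num : -(1:ℝ)/2 ≠ 0)]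
  rcases le_or_gt t 1 with h1 | h1
  · have key := log_mul_quarter_lt t h h1
    have hq : (0:ℝ) < t ^ ((1:ℝ)/4) := Real.rpow_pos_of_pos h _
    have hsq : (t ^ ((1:ℝ)/4)) ^ 2 = t ^ ((1:ℝ)/2) := by
      rw [← Real.rpow_natCast (t ^ ((1:ℝ)/4)) 2, ← Real.rpow_mul h.le]
      norm_num
    have h' : (Real.log t)^2 * t ^ ((1:ℝ)/2) ≤ 16 := by
      have := mul_le_mul (le_of_lt key) (le_of_lt key) (by positivity) (by norm_num)
      calc (Real.log t)^2 * t ^ ((1:ℝ)/2) = (|Real.log t| * t ^ ((1:ℝ)/4)) *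
            (|Real.log t| * t ^ ((1:ℝ)/4)) := by rw [← hsq, ← sq_abs (Real.log t)]; ring
        _ ≤ 4 * 4 := this
        _ = 16 := by norm_num
    have hpos : (0:ℝ) < t ^ ((1:ℝ)/2) := Real.rpow_pos_of_pos h _
    have hinv : t ^ (-(1:ℝ)/2) = (t ^ ((1:ℝ)/2))⁻¹ := by
      rw [← Real.rpow_neg h0]; norm_num
    rw [hinv, mul_comm (16:ℝ), ← div_eq_inv_mul, le_div_iff₀ hpos]
    exact h'
  · have hl0 : 0 ≤ Real.log t := Real.log_nonneg h1.le
    have hl1 : Real.log t ≤ 1 := by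
      have := Real.log_le_sub_one_of_pos (by positivity : (0:ℝ) < t)
      linarith
    have hr : (2:ℝ) ^ (-(1:ℝ)/2) ≤ t ^ (-(1:ℝ)/2) :=
      Real.rpow_le_rpow_of_nonpos h h2 (by norm_num)
    nlinarith [two_rpow_half_bounds]

lemma abs_log_le_inv_sqrt (t : ℝ) (h0 : 0 ≤ t) (h2 : t ≤ 2) :
    |Real.log t| ≤ 4 * t ^ (-(1:ℝ)/2) := by
  rcases eq_or_lt_of_le h0 with h | h
  · rw [← h]; simp [Real.zero_rpow (by norm_num : -(1:ℝ)/2 ≠ 0)]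
  rcases le_or_gt t 1 with h1 | h1
  · have key := log_mul_quarter_lt t h h1
    have hq : (0:ℝ) < t ^ ((1:ℝ)/4) := Real.rpow_pos_of_pos h _
    have e : t ^ (-(1:ℝ)/4) = (t ^ ((1:ℝ)/4))⁻¹ := by
      rw [← Real.rpow_neg h0]; norm_num
    have h4 : |Real.log t| ≤ 4 * t ^ (-(1:ℝ)/4) := by
      rw [e, mul_comm (4:ℝ), ← div_eq_inv_mul, le_div_iff₀ hq]
      exact key.le
    have hmono : t ^ (-(1:ℝ)/4) ≤ t ^ (-(1:ℝ)/2) := by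
      apply Real.rpow_le_rpow_of_exponent_ge h h1
      norm_num
    linarith
  · have hl0 : 0 ≤ Real.log t := Real.log_nonneg h1.le
    have hl1 : Real.log t ≤ 1 := by
      have := Real.log_le_sub_one_of_pos (by positivity : (0:ℝ) < t)
      linarith
    have hr : (2:ℝ) ^ (-(1:ℝ)/2) ≤ t ^ (-(1:ℝ)/2) :=
      Real.rpow_le_rpow_of_nonpos h h2 (by norm_num)
    rw [abs_of_nonneg hl0]
    nlinarith [two_rpow_half_bounds]

-- exp bound
lemma exp_quad_bound {x : ℝ} (hx : x ≤ 1) : Real.exp x ≤ 1 + x + x ^ 2 := by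
  rcases le_or_gt 0 x with h0 | h0
  · have := Real.exp_bound' h0 hx (n := 2) (by norm_num)
    simp [Finset.sum_range_succ] at this
    nlinarith [sq_nonneg x]
  · have h1 : 1 - x ≤ Real.exp (-x) := by
      have := Real.add_one_le_exp (-x); linarith
    have h2 : Real.exp x * Real.exp (-x) = 1 := by
      rw [← Real.exp_add]; simp
    have h3 : 0 < Real.exp x := Real.exp_pos x
    have h4 : Real.exp x * (1 - x) ≤ 1 := by nlinarith
    nlinarith [sq_nonneg x, mul_pos h3 (by nlinarith : (0:ℝ) < 1 - x)]

-- pointwise rpow bound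
lemma rpow_quad_bound {t γ : ℝ} (h0 : 0 ≤ t) (h2 : t ≤ 2) (hγ0 : 0 < γ) (hγ1 : γ < 1) :
    t ^ γ ≤ 1 + γ * Real.log t + γ ^ 2 * (Real.log t) ^ 2 := by
  rcases eq_or_lt_of_le h0 with h | h
  · rw [← h, Real.zero_rpow hγ0.ne']
    simp
  · rw [Real.rpow_def_of_pos h]
    have hlog2 : Real.log t ≤ Real.log 2 := Real.log_le_log h h2
    have hl2 : Real.log 2 < 1 := by
      have := Real.log_two_lt_d9; linarith
    have hx : Real.log t * γ ≤ 1 := by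
      rcases le_or_gt (Real.log t) 0 with hl | hl
      · nlinarith
      · nlinarith
    have := exp_quad_bound hx
    nlinarith [sq_nonneg (Real.log t * γ)]


lemma abs_rpow_neg_half (x : ℝ) :
    |x| ^ (-(1:ℝ)/2) = x ^ (-(1:ℝ)/2) + (-x) ^ (-(1:ℝ)/2) := by
  rcases lt_trichotomy x 0 with h | h | h
  · rw [abs_of_neg h, Real.rpow_def_of_neg h]
    rw [show -(1:ℝ)/2 = -(1/2) by norm_num]
    rw [show (-(1/2:ℝ)) * π = -(π/2) by ring, Real.cos_neg, Real.cos_pi_div_two]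
    simp
  · simp [h, Real.zero_rpow (by norm_num : -(1:ℝ)/2 ≠ 0)]
  · rw [abs_of_pos h, Real.rpow_def_of_neg (by linarith : -x < 0)]
    rw [show -(1:ℝ)/2 = -(1/2) by norm_num]
    rw [show (-(1/2:ℝ)) * π = -(π/2) by ring, Real.cos_neg, Real.cos_pi_div_two]
    simp

lemma abs_fun_eq (s : ℝ) : (fun θ : ℝ => |θ - s| ^ (-(1:ℝ)/2)) =
    fun θ => (θ - s) ^ (-(1:ℝ)/2) + (s - θ) ^ (-(1:ℝ)/2) := by
  funext θ
  rw [abs_rpow_neg_half (θ - s), neg_sub]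

lemma int1 (s a b : ℝ) : IntervalIntegrable (fun θ : ℝ => (θ - s) ^ (-(1:ℝ)/2)) volume a b := by
  have := (intervalIntegral.intervalIntegrable_rpow'
    (a := a - s) (b := b - s) (by norm_num : (-1:ℝ) < -(1:ℝ)/2)).comp_sub_right s
  simpa using this

lemma int2 (s a b : ℝ) : IntervalIntegrable (fun θ : ℝ => (s - θ) ^ (-(1:ℝ)/2)) volume a b := by
  have := (intervalIntegral.intervalIntegrable_rpow'
    (a := s - a) (b := s - b) (by norm_num : (-1:ℝ) < -(1:ℝ)/2)).comp_sub_left s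
  simpa using this

lemma intInt_inv_sqrt_abs (s a b : ℝ) :
    IntervalIntegrable (fun θ => |θ - s| ^ (-(1:ℝ)/2)) volume a b := by
  rw [abs_fun_eq]
  exact (int1 s a b).add (int2 s a b)

lemma integral_inv_sqrt_abs (s a b : ℝ) :
    (∫ θ in a..b, |θ - s| ^ (-(1:ℝ)/2)) =
      2 * ((b - s) ^ ((1:ℝ)/2) - (a - s) ^ ((1:ℝ)/2)) +
      2 * ((s - a) ^ ((1:ℝ)/2) - (s - b) ^ ((1:ℝ)/2)) := by
  have e : (∫ θ in a..b, |θ - s| ^ (-(1:ℝ)/2)) =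
      (∫ θ in a..b, (θ - s) ^ (-(1:ℝ)/2)) + ∫ θ in a..b, (s - θ) ^ (-(1:ℝ)/2) := by
    rw [← intervalIntegral.integral_add (int1 s a b) (int2 s a b)]
    rw [abs_fun_eq]
  rw [e]
  have e1 : (∫ θ in a..b, (θ - s) ^ (-(1:ℝ)/2)) =
      ∫ x in (a-s)..(b-s), x ^ (-(1:ℝ)/2) :=
    intervalIntegral.integral_comp_sub_right (fun x => x ^ (-(1:ℝ)/2)) s
  have e2 : (∫ θ in a..b, (s - θ) ^ (-(1:ℝ)/2)) =
      ∫ x in (s-b)..(s-a), x ^ (-(1:ℝ)/2) :=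
    intervalIntegral.integral_comp_sub_left (fun x => x ^ (-(1:ℝ)/2)) s
  rw [e1, e2, integral_rpow (Or.inl (by norm_num)), integral_rpow (Or.inl (by norm_num))]
  norm_num
  ring

lemma rpow_half_of_neg {x : ℝ} (h : x < 0) : x ^ ((1:ℝ)/2) = 0 := by
  rw [Real.rpow_def_of_neg h, show ((1:ℝ)/2) * π = π/2 by ring, Real.cos_pi_div_two, mul_zero]

lemma rpow_half_pi_half_le : (π/2) ^ ((1:ℝ)/2) ≤ 3/2 := by
  rw [show ((1:ℝ)/2) = 1/(2:ℝ) by norm_num, ← Real.sqrt_eq_rpow]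
  nlinarith [Real.sq_sqrt (by positivity : (0:ℝ) ≤ π/2), Real.sqrt_nonneg (π/2),
    Real.pi_le_four]

-- pointwise inverse-sqrt comparison
lemma ptwise_inv_sqrt {m : ℝ → ℝ} {s : ℝ} (hs : m s = 0) (θ : ℝ)
    (h : 4/π * |θ - s| ≤ |m θ|) :
    |m θ| ^ (-(1:ℝ)/2) ≤ |θ - s| ^ (-(1:ℝ)/2) := by
  rcases eq_or_ne θ s with rfl | hne
  · rw [hs]; simp
  · have hpos : 0 < |θ - s| := abs_pos.mpr (sub_ne_zero.mpr hne)
    have hπ : 0 < π := Real.pi_pos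
    have hc : (0:ℝ) < 4/π * |θ - s| := by positivity
    have h1 : |m θ| ^ (-(1:ℝ)/2) ≤ (4/π * |θ - s|) ^ (-(1:ℝ)/2) :=
      Real.rpow_le_rpow_of_nonpos hc h (by norm_num)
    have h2 : (4/π * |θ - s|) ^ (-(1:ℝ)/2) =
        (4/π) ^ (-(1:ℝ)/2) * |θ - s| ^ (-(1:ℝ)/2) :=
      Real.mul_rpow (by positivity) (abs_nonneg _)
    have h3 : (4/π) ^ (-(1:ℝ)/2) ≤ 1 :=
      Real.rpow_le_one_of_one_le_of_nonpos
        (by rw [le_div_iff₀ hπ]; nlinarith [Real.pi_le_four]) (by norm_num)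
    have h4 : (0:ℝ) ≤ |θ - s| ^ (-(1:ℝ)/2) := Real.rpow_nonneg (abs_nonneg _) _
    calc |m θ| ^ (-(1:ℝ)/2) ≤ (4/π) ^ (-(1:ℝ)/2) * |θ - s| ^ (-(1:ℝ)/2) := by
          rw [← h2]; exact h1
      _ ≤ 1 * |θ - s| ^ (-(1:ℝ)/2) := by nlinarith
      _ = _ := one_mul _

lemma intInt_inv_sqrt_of_lb {m : ℝ → ℝ} (hm : Continuous m) {s a b : ℝ} (hs : m s = 0)
    (h : ∀ θ ∈ uIcc a b, 4/π * |θ - s| ≤ |m θ|) :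
    IntervalIntegrable (fun θ => |m θ| ^ (-(1:ℝ)/2)) volume a b := by
  apply (intInt_inv_sqrt_abs s a b).mono_fun'
  · have : (fun θ => |m θ| ^ (-(1:ℝ)/2)) = fun θ => (Real.sqrt |m θ|)⁻¹ := by
      funext θ
      rw [show -(1:ℝ)/2 = -(1/2) by norm_num, Real.rpow_neg (abs_nonneg _),
        ← Real.sqrt_eq_rpow]
    rw [this]
    exact ((Real.continuous_sqrt.comp hm.abs).measurable).inv.aestronglyMeasurable
  · filter_upwards [MeasureTheory.ae_restrict_mem measurableSet_uIoc] with θ hθ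
    have hθ' : θ ∈ uIcc a b := uIoc_subset_uIcc hθ
    rw [Real.norm_eq_abs, abs_of_nonneg (Real.rpow_nonneg (abs_nonneg _) _)]
    exact ptwise_inv_sqrt hs θ (h θ hθ')

lemma jordan_abs_sin {x : ℝ} (hx : |x| ≤ π/2) : 2/π * |x| ≤ |Real.sin x| := by
  rcases le_or_gt 0 x with h | h
  · rw [abs_of_nonneg h] at *
    rw [abs_of_nonneg (Real.sin_nonneg_of_nonneg_of_le_pi h (by nlinarith [Real.pi_pos]))]
    exact Real.mul_le_sin h hx
  · rw [abs_of_neg h] at *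
    rw [abs_of_nonpos (Real.sin_nonpos_of_nonpos_of_neg_pi_le h.le (by nlinarith [Real.pi_pos] : -π ≤ x))]
    rw [← Real.sin_neg]
    exact Real.mul_le_sin (by linarith) hx

lemma jordan_cos {θ : ℝ} (h : θ ∈ uIcc (0:ℝ) π) : 4/π * |θ - π/2| ≤ |2 * Real.cos θ| := by
  rw [uIcc_of_le Real.pi_pos.le] at h
  have h1 : |π/2 - θ| ≤ π/2 := by
    rw [abs_le]; constructor <;> [linarith [h.2]; linarith [h.1]]
  have := jordan_abs_sin h1
  rw [Real.sin_pi_div_two_sub] at this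
  rw [abs_mul, abs_sub_comm θ (π/2)]
  have hπ := Real.pi_pos
  calc 4/π * |π/2 - θ| = 2 * (2/π * |π/2 - θ|) := by ring
    _ ≤ 2 * |Real.cos θ| := by linarith
    _ = |2| * |Real.cos θ| := by norm_num

lemma hcos_intInt : IntervalIntegrable (fun θ => |2 * Real.cos θ| ^ (-(1:ℝ)/2)) volume 0 π :=
  intInt_inv_sqrt_of_lb (by continuity) (s := π/2)
    (by simp [Real.cos_pi_div_two]) (fun θ h => jordan_cos h)

-- sin pieces
lemma jordan_sin0 {θ : ℝ} (h : θ ∈ uIcc (-(π/2)) (π/2)) : 4/π * |θ - 0| ≤ |2 * Real.sin θ| := by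
  rw [uIcc_of_le (by linarith [Real.pi_pos] : -(π/2) ≤ π/2)] at h
  have h1 : |θ| ≤ π/2 := abs_le.mpr ⟨by linarith [h.1], h.2⟩
  have := jordan_abs_sin h1
  rw [sub_zero, abs_mul]
  have hπ := Real.pi_pos
  calc 4/π * |θ| = 2 * (2/π * |θ|) := by ring
    _ ≤ 2 * |Real.sin θ| := by linarith
    _ = |2| * |Real.sin θ| := by norm_num

lemma jordan_sin_pi {θ : ℝ} (h : θ ∈ uIcc (π/2) (3*π/2)) :
    4/π * |θ - π| ≤ |2 * Real.sin θ| := by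
  rw [uIcc_of_le (by linarith [Real.pi_pos] : π/2 ≤ 3*π/2)] at h
  have h1 : |θ - π| ≤ π/2 := abs_le.mpr ⟨by linarith [h.1], by linarith [h.2]⟩
  have := jordan_abs_sin h1
  have e : Real.sin (θ - π) = -Real.sin θ := by
    rw [Real.sin_sub]; simp
  rw [e, abs_neg] at this
  rw [abs_mul]
  have hπ := Real.pi_pos
  calc 4/π * |θ - π| = 2 * (2/π * |θ - π|) := by ring
    _ ≤ 2 * |Real.sin θ| := by linarith
    _ = |2| * |Real.sin θ| := by norm_num

lemma jordan_sin_two_pi {θ : ℝ} (h : θ ∈ uIcc (3*π/2) (2*π)) :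
    4/π * |θ - 2*π| ≤ |2 * Real.sin θ| := by
  rw [uIcc_of_le (by linarith [Real.pi_pos] : 3*π/2 ≤ 2*π)] at h
  have hπ' := Real.pi_pos
  have h1 : |θ - 2*π| ≤ π/2 := abs_le.mpr ⟨by linarith [h.1], by linarith [h.2]⟩
  have := jordan_abs_sin h1
  have e : Real.sin (θ - 2*π) = Real.sin θ := by
    rw [Real.sin_sub]; simp
  rw [e] at this
  rw [abs_mul]
  have hπ := Real.pi_pos
  calc 4/π * |θ - 2*π| = 2 * (2/π * |θ - 2*π|) := by ring
    _ ≤ 2 * |Real.sin θ| := by linarith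
    _ = |2| * |Real.sin θ| := by norm_num

lemma hsin_int0 : IntervalIntegrable (fun θ => |2 * Real.sin θ| ^ (-(1:ℝ)/2)) volume (-(π/2)) (π/2) :=
  intInt_inv_sqrt_of_lb (by continuity) (s := 0) (by simp) (fun θ h => jordan_sin0 h)

lemma hsin_int_pi : IntervalIntegrable (fun θ => |2 * Real.sin θ| ^ (-(1:ℝ)/2)) volume (π/2) (3*π/2) :=
  intInt_inv_sqrt_of_lb (by continuity) (s := π) (by simp) (fun θ h => jordan_sin_pi h)

lemma hsin_int_two_pi : IntervalIntegrable (fun θ => |2 * Real.sin θ| ^ (-(1:ℝ)/2)) volume (3*π/2) (2*π) :=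
  intInt_inv_sqrt_of_lb (by continuity) (s := 2*π) (by simp) (fun θ h => jordan_sin_two_pi h)

noncomputable def fc (θ : ℝ) : ℝ := Real.log |2 * Real.cos θ|
noncomputable def fs (θ : ℝ) : ℝ := Real.log |2 * Real.sin θ|

lemma fs_meas : Measurable fs :=
  Real.measurable_log.comp (continuous_abs.comp (by continuity : Continuous fun θ : ℝ => 2 * Real.sin θ)).measurable

lemma fc_meas : Measurable fc :=
  Real.measurable_log.comp (continuous_abs.comp (by continuity : Continuous fun θ : ℝ => 2 * Real.cos θ)).measurable

lemma abs_two_sin_le (θ : ℝ) : |2 * Real.sin θ| ≤ 2 := by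
  rw [abs_mul]
  calc |(2:ℝ)| * |Real.sin θ| ≤ 2 * 1 := by
        have := Real.abs_sin_le_one θ
        rw [abs_two]; nlinarith [abs_nonneg (Real.sin θ)]
    _ = 2 := by norm_num

lemma abs_two_cos_le (θ : ℝ) : |2 * Real.cos θ| ≤ 2 := by
  rw [abs_mul]
  calc |(2:ℝ)| * |Real.cos θ| ≤ 2 * 1 := by
        have := Real.abs_cos_le_one θ
        rw [abs_two]; nlinarith [abs_nonneg (Real.cos θ)]
    _ = 2 := by norm_num

lemma fs_intInt_of {a b : ℝ}
    (h : IntervalIntegrable (fun θ => |2 * Real.sin θ| ^ (-(1:ℝ)/2)) volume a b) :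
    IntervalIntegrable fs volume a b := by
  apply (h.const_mul 4).mono_fun' fs_meas.aestronglyMeasurable
  apply MeasureTheory.ae_of_all
  intro θ
  simp only [Real.norm_eq_abs]
  exact abs_log_le_inv_sqrt _ (abs_nonneg _) (abs_two_sin_le θ)

lemma fs_int1 : IntervalIntegrable fs volume 0 (π/2) := by
  apply (fs_intInt_of hsin_int0).mono_set
  apply uIcc_subset_uIcc <;>
    rw [uIcc_of_le (by linarith [Real.pi_pos] : -(π/2) ≤ π/2)] <;>
    exact Set.mem_Icc.mpr ⟨by linarith [Real.pi_pos], by linarith [Real.pi_pos]⟩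

lemma fs_int2 : IntervalIntegrable fs volume (π/2) (3*π/2) := fs_intInt_of hsin_int_pi

lemma fs_int3 : IntervalIntegrable fs volume (3*π/2) (2*π) := fs_intInt_of hsin_int_two_pi

lemma fs_int_mid : IntervalIntegrable fs volume (π/2) π :=
  fs_int2.mono_set (uIcc_subset_uIcc left_mem_uIcc
    (by rw [uIcc_of_le (by nlinarith [Real.pi_pos] : π/2 ≤ 3*π/2)]; constructor <;> nlinarith [Real.pi_pos]))

lemma fs_int_pi32 : IntervalIntegrable fs volume π (3*π/2) :=
  fs_int2.mono_set (uIcc_subset_uIcc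
    (by rw [uIcc_of_le (by nlinarith [Real.pi_pos] : π/2 ≤ 3*π/2)]; constructor <;> nlinarith [Real.pi_pos]) right_mem_uIcc)

lemma fs_int_0pi : IntervalIntegrable fs volume 0 π := fs_int1.trans fs_int_mid

lemma fs_int_02pi : IntervalIntegrable fs volume 0 (2*π) :=
  (fs_int_0pi.trans fs_int_pi32).trans fs_int3

lemma fc_intInt : IntervalIntegrable fc volume 0 π := by
  apply (hcos_intInt.const_mul 4).mono_fun' fc_meas.aestronglyMeasurable
  apply MeasureTheory.ae_of_all
  intro θ
  simp only [Real.norm_eq_abs]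
  exact abs_log_le_inv_sqrt _ (abs_nonneg _) (abs_two_cos_le θ)

-- null sets
lemma sin_zero_null : volume {x : ℝ | Real.sin x = 0} = 0 := by
  have : {x : ℝ | Real.sin x = 0} = Set.range (fun n : ℤ => (n:ℝ) * π) := by
    ext x; simp [Real.sin_eq_zero_iff, Set.mem_range]
  rw [this]
  exact Set.Countable.measure_zero (Set.countable_range _) _

lemma cos_zero_null : volume {x : ℝ | Real.cos x = 0} = 0 := by
  have : {x : ℝ | Real.cos x = 0} = Set.range (fun n : ℤ => (2*(n:ℝ) + 1) * π / 2) := by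
    ext x
    simp only [Set.mem_setOf_eq, Real.cos_eq_zero_iff, Set.mem_range]
    constructor <;> rintro ⟨k, hk⟩ <;> exact ⟨k, hk.symm⟩
  rw [this]
  exact Set.Countable.measure_zero (Set.countable_range _) _

lemma ae_sin_cos_ne : ∀ᵐ θ : ℝ, Real.sin θ ≠ 0 ∧ Real.cos θ ≠ 0 := by
  have h1 : ∀ᵐ θ : ℝ, Real.sin θ ≠ 0 := by
    rw [MeasureTheory.ae_iff]
    simpa using sin_zero_null
  have h2 : ∀ᵐ θ : ℝ, Real.cos θ ≠ 0 := by
    rw [MeasureTheory.ae_iff]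
    simpa using cos_zero_null
  exact h1.and h2

-- the doubling argument
lemma integral_fc_zero : (∫ θ in (0:ℝ)..π, fc θ) = 0 := by
  set S := ∫ θ in (0:ℝ)..π, fs θ with hS
  -- step (a): ∫ fc = ∫_{π/2}^{3π/2} fs
  have ha : (∫ θ in (0:ℝ)..π, fc θ) = ∫ θ in (π/2)..(3*π/2), fs θ := by
    have e1 : (fun θ => fc θ) = fun θ => fs (θ + π/2) := by
      funext θ; simp only [fc, fs, Real.sin_add_pi_div_two]
    rw [e1, intervalIntegral.integral_comp_add_right fs (π/2)]
    norm_num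
    congr 1
    ring
  -- shift lemma: fs(θ+π) = fs θ
  have hper : ∀ θ, fs (θ + π) = fs θ := by
    intro θ
    simp only [fs, Real.sin_add_pi]
    rw [show 2 * -Real.sin θ = -(2 * Real.sin θ) by ring, abs_neg]
  -- step (c): ∫_π^{3π/2} fs = ∫_0^{π/2} fs
  have hc : (∫ θ in π..(3*π/2), fs θ) = ∫ θ in (0:ℝ)..(π/2), fs θ := by
    have := intervalIntegral.integral_comp_add_right (a := (0:ℝ)) (b := π/2) fs π
    simp only [hper] at this
    rw [show (0:ℝ)+π = π by ring, show π/2+π = 3*π/2 by ring] at this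
    exact this.symm
  -- similarly ∫_π^{2π} fs = ∫_0^π fs
  have hc2 : (∫ θ in π..(2*π), fs θ) = S := by
    have := intervalIntegral.integral_comp_add_right (a := (0:ℝ)) (b := π) fs π
    simp only [hper] at this
    rw [show (0:ℝ)+π = π by ring, show π+π = 2*π by ring] at this
    rw [hS, this]
  -- C = S
  have hCS : (∫ θ in (0:ℝ)..π, fc θ) = S := by
    rw [ha]
    rw [← intervalIntegral.integral_add_adjacent_intervals fs_int_mid fs_int_pi32, hc]
    rw [hS, ← intervalIntegral.integral_add_adjacent_intervals fs_int1 fs_int_mid]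
    ring
  -- step (e)+(f): ∫_0^π fs(2θ) dθ = S
  have he : (∫ θ in (0:ℝ)..π, fs (2*θ)) = S := by
    rw [intervalIntegral.integral_comp_mul_left fs (by norm_num : (2:ℝ) ≠ 0)]
    have e2 : (∫ θ in (2*0:ℝ)..(2*π), fs θ) = S + S := by
      rw [show (2*0:ℝ) = 0 by norm_num]
      rw [← intervalIntegral.integral_add_adjacent_intervals fs_int_0pi
        (fs_int_pi32.trans fs_int3), hc2]
    rw [e2]
    simp only [smul_eq_mul]
    ring
  -- step (g): ∫_0^π fs(2θ) = S + C
  have hg : (∫ θ in (0:ℝ)..π, fs (2*θ)) = S + ∫ θ in (0:ℝ)..π, fc θ := by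
    have hcongr : (∫ θ in (0:ℝ)..π, fs (2*θ)) = ∫ θ in (0:ℝ)..π, (fs θ + fc θ) := by
      apply intervalIntegral.integral_congr_ae
      filter_upwards [ae_sin_cos_ne] with θ hθ _
      obtain ⟨hsin, hcos⟩ := hθ
      simp only [fs, fc]
      have e3 : |2 * Real.sin (2*θ)| = |2 * Real.sin θ| * |2 * Real.cos θ| := by
        rw [← abs_mul]
        congr 1
        rw [Real.sin_two_mul]
        ring
      rw [e3, Real.log_mul (by positivity) (by positivity)]
    rw [hcongr, intervalIntegral.integral_add fs_int_0pi fc_intInt]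
  have := he.symm.trans hg
  linarith [hCS]


lemma fc_cos2_int : IntervalIntegrable (fun θ => fc θ * Real.cos (2*θ)) volume 0 π := by
  apply (hcos_intInt.const_mul 4).mono_fun'
    ((fc_meas.mul (by continuity : Continuous fun θ : ℝ => Real.cos (2*θ)).measurable).aestronglyMeasurable)
  apply MeasureTheory.ae_of_all
  intro θ
  have hb := abs_log_le_inv_sqrt _ (abs_nonneg (2 * Real.cos θ)) (abs_two_cos_le θ)
  have h1 : |fc θ * Real.cos (2*θ)| ≤ |fc θ| := by
    rw [abs_mul]
    nlinarith [Real.abs_cos_le_one (2*θ), abs_nonneg (fc θ)]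
  simp only [Real.norm_eq_abs]
  exact le_trans h1 hb

noncomputable def F (θ : ℝ) : ℝ := fc θ * Real.sin (2*θ)/2 + θ/2 - Real.sin (2*θ)/4

lemma fc_eq : fc = fun θ => Real.log (2 * Real.cos θ) := funext fun θ => Real.log_abs _

lemma F_hasDeriv {θ : ℝ} (h : Real.cos θ ≠ 0) :
    HasDerivAt F (fc θ * Real.cos (2*θ)) θ := by
  have hne : 2 * Real.cos θ ≠ 0 := by simpa using h
  have h1 : HasDerivAt (fun θ => 2 * Real.cos θ) (2 * (-Real.sin θ)) θ :=
    (Real.hasDerivAt_cos θ).const_mul 2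
  have h2 : HasDerivAt (fun θ => Real.log (2 * Real.cos θ))
      ((2 * Real.cos θ)⁻¹ * (2 * (-Real.sin θ))) θ :=
    by have := (Real.hasDerivAt_log hne).comp θ h1; exact this
  have hid : HasDerivAt (fun x : ℝ => 2*x) 2 θ := by
    simpa using (hasDerivAt_id θ).const_mul 2
  have h3 : HasDerivAt (fun θ : ℝ => Real.sin (2*θ)) (Real.cos (2*θ) * 2) θ := by
    exact (Real.hasDerivAt_sin (2*θ)).comp θ hid
  have h4 : HasDerivAt (fun θ : ℝ => Real.log (2 * Real.cos θ) * Real.sin (2*θ)/2)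
      (((2 * Real.cos θ)⁻¹ * (2 * (-Real.sin θ)) * Real.sin (2*θ) +
        Real.log (2 * Real.cos θ) * (Real.cos (2*θ) * 2))/2) θ :=
    (h2.mul h3).div_const 2
  have h5 : HasDerivAt (fun θ : ℝ => θ/2) (1/2) θ := (hasDerivAt_id θ).div_const 2
  have h6 : HasDerivAt (fun θ : ℝ => Real.sin (2*θ)/4) (Real.cos (2*θ) * 2/4) θ :=
    h3.div_const 4
  have h7 := (h4.add h5).sub h6
  have : F = fun θ => Real.log (2 * Real.cos θ) * Real.sin (2*θ)/2 + θ/2 - Real.sin (2*θ)/4 := by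
    unfold F; rw [fc_eq]
  rw [this]
  refine h7.congr_deriv (Eq.symm ?_)
  have key : (2 * Real.cos θ)⁻¹ * (2 * -Real.sin θ) * Real.sin (2*θ) =
      -2 * Real.sin θ^2 := by
    rw [Real.sin_two_mul]
    field_simp
  simp only [fc_eq]
  rw [key, Real.cos_two_mul]
  linear_combination Real.sin_sq_add_cos_sq θ

lemma tendsto_G : Tendsto (fun u => Real.log (2*u) * u) (𝓝[>] (0:ℝ)) (𝓝 0) := by
  have h1 : Tendsto (fun u : ℝ => Real.log u * u) (𝓝[>] (0:ℝ)) (𝓝 0) := by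
    have := tendsto_log_mul_rpow_nhdsGT_zero (one_pos)
    refine this.congr (fun u => by rw [Real.rpow_one])
  have h2 : Tendsto (fun u : ℝ => Real.log 2 * u) (𝓝[>] (0:ℝ)) (𝓝 0) := by
    have : Tendsto (fun u : ℝ => Real.log 2 * u) (𝓝 (0:ℝ)) (𝓝 (Real.log 2 * 0)) :=
      (continuous_const.mul continuous_id).tendsto 0
    rw [mul_zero] at this
    exact this.mono_left nhdsWithin_le_nhds
  have h3 := h2.add h1
  rw [add_zero] at h3
  refine h3.congr (fun u => ?_)
  rcases eq_or_ne u 0 with rfl | hu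
  · simp
  · rw [Real.log_mul (by norm_num) hu]; ring

lemma F_cont_at {θ₀ : ℝ} (h : Real.cos θ₀ ≠ 0) : ContinuousAt F θ₀ := by
  have h2 : ContinuousAt (fun θ => Real.log |2 * Real.cos θ|) θ₀ :=
    ContinuousAt.log ((continuous_abs.comp
      (by continuity : Continuous fun θ : ℝ => 2 * Real.cos θ)).continuousAt)
      (by simpa using h)
  unfold F fc
  exact (((h2.mul (by fun_prop)).div_const 2).add (by fun_prop)).sub (by fun_prop)

lemma T1_tendsto_left : Tendsto F (𝓝[<] (π/2)) (𝓝 (π/4)) := by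
  have hmem : Set.Ioo (0:ℝ) (π/2) ∈ 𝓝[<] (π/2) :=
    Ioo_mem_nhdsLT_of_mem (Set.mem_Ioc.mpr ⟨by positivity, le_refl _⟩)
  have habs : Tendsto (fun θ => |Real.cos θ|) (𝓝[<] (π/2)) (𝓝[>] 0) := by
    rw [tendsto_nhdsWithin_iff]
    constructor
    · have hc : Tendsto (fun θ => |Real.cos θ|) (𝓝 (π/2)) (𝓝 |Real.cos (π/2)|) :=
        (continuous_abs.comp Real.continuous_cos).tendsto _
      rw [Real.cos_pi_div_two, abs_zero] at hc
      exact hc.mono_left nhdsWithin_le_nhds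
    · filter_upwards [hmem] with θ hθ
      have := Real.cos_pos_of_mem_Ioo (Set.mem_Ioo.mpr ⟨by linarith [hθ.1, Real.pi_pos], hθ.2⟩)
      exact Set.mem_Ioi.mpr (abs_pos.mpr this.ne')
  have hG := tendsto_G.comp habs
  have hsin : Tendsto (fun θ => Real.sin θ) (𝓝[<] (π/2)) (𝓝 1) := by
    have := Real.continuous_sin.tendsto (π/2)
    rw [Real.sin_pi_div_two] at this
    exact this.mono_left nhdsWithin_le_nhds
  have hT1 : Tendsto (fun θ => fc θ * Real.sin (2*θ)/2) (𝓝[<] (π/2)) (𝓝 0) := by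
    have hmul := hG.mul hsin
    rw [zero_mul] at hmul
    apply hmul.congr'
    filter_upwards [hmem] with θ hθ
    have hcpos : 0 < Real.cos θ :=
      Real.cos_pos_of_mem_Ioo (Set.mem_Ioo.mpr ⟨by linarith [hθ.1, Real.pi_pos], hθ.2⟩)
    simp only [Function.comp_apply, fc, abs_mul, abs_two, abs_of_pos hcpos]
    rw [Real.sin_two_mul]
    ring
  have hrest : Tendsto (fun θ : ℝ => θ/2 - Real.sin (2*θ)/4) (𝓝[<] (π/2)) (𝓝 (π/4)) := by
    have hc : ContinuousAt (fun θ : ℝ => θ/2 - Real.sin (2*θ)/4) (π/2) := by fun_prop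
    have := hc.tendsto.mono_left (nhdsWithin_le_nhds (s := Set.Iio (π/2)))
    have e : π/2/2 - Real.sin (2*(π/2))/4 = π/4 := by
      rw [show 2*(π/2) = π by ring, Real.sin_pi]
      ring
    rwa [e] at this
  have := hT1.add hrest
  rw [zero_add] at this
  apply this.congr
  intro θ
  unfold F
  ring

lemma T1_tendsto_right : Tendsto F (𝓝[>] (π/2)) (𝓝 (π/4)) := by
  have hmem : Set.Ioo (π/2) π ∈ 𝓝[>] (π/2) :=
    Ioo_mem_nhdsGT_of_mem (Set.mem_Ico.mpr ⟨le_refl _, by linarith [Real.pi_pos]⟩)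
  have habs : Tendsto (fun θ => |Real.cos θ|) (𝓝[>] (π/2)) (𝓝[>] 0) := by
    rw [tendsto_nhdsWithin_iff]
    constructor
    · have hc : Tendsto (fun θ => |Real.cos θ|) (𝓝 (π/2)) (𝓝 |Real.cos (π/2)|) :=
        (continuous_abs.comp Real.continuous_cos).tendsto _
      rw [Real.cos_pi_div_two, abs_zero] at hc
      exact hc.mono_left nhdsWithin_le_nhds
    · filter_upwards [hmem] with θ hθ
      have : Real.cos θ < 0 := Real.cos_neg_of_pi_div_two_lt_of_lt hθ.1
        (by linarith [hθ.2, Real.pi_pos])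
      exact Set.mem_Ioi.mpr (abs_pos.mpr this.ne)
  have hG := tendsto_G.comp habs
  have hsin : Tendsto (fun θ => Real.sin θ) (𝓝[>] (π/2)) (𝓝 1) := by
    have := Real.continuous_sin.tendsto (π/2)
    rw [Real.sin_pi_div_two] at this
    exact this.mono_left nhdsWithin_le_nhds
  have hT1 : Tendsto (fun θ => fc θ * Real.sin (2*θ)/2) (𝓝[>] (π/2)) (𝓝 0) := by
    have hmul := (hG.mul hsin).neg
    rw [zero_mul, neg_zero] at hmul
    apply hmul.congr'
    filter_upwards [hmem] with θ hθ
    have hcneg : Real.cos θ < 0 := Real.cos_neg_of_pi_div_two_lt_of_lt hθ.1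
      (by linarith [hθ.2, Real.pi_pos])
    simp only [Function.comp_apply, fc, abs_mul, abs_two, abs_of_neg hcneg]
    rw [Real.sin_two_mul]
    ring_nf
  have hrest : Tendsto (fun θ : ℝ => θ/2 - Real.sin (2*θ)/4) (𝓝[>] (π/2)) (𝓝 (π/4)) := by
    have hc : ContinuousAt (fun θ : ℝ => θ/2 - Real.sin (2*θ)/4) (π/2) := by fun_prop
    have := hc.tendsto.mono_left (nhdsWithin_le_nhds (s := Set.Ioi (π/2)))
    have e : π/2/2 - Real.sin (2*(π/2))/4 = π/4 := by
      rw [show 2*(π/2) = π by ring, Real.sin_pi]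
      ring
    rwa [e] at this
  have := hT1.add hrest
  rw [zero_add] at this
  apply this.congr
  intro θ
  unfold F
  ring

lemma integral_fc_cos2 : (∫ θ in (0:ℝ)..π, fc θ * Real.cos (2*θ)) = π/2 := by
  have hπ := Real.pi_pos
  have hsub1 : IntervalIntegrable (fun θ => fc θ * Real.cos (2*θ)) volume 0 (π/2) :=
    fc_cos2_int.mono_set (uIcc_subset_uIcc left_mem_uIcc
      (by rw [uIcc_of_le hπ.le]; exact Set.mem_Icc.mpr ⟨by linarith, by linarith⟩))
  have hsub2 : IntervalIntegrable (fun θ => fc θ * Real.cos (2*θ)) volume (π/2) π :=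
    fc_cos2_int.mono_set (uIcc_subset_uIcc
      (by rw [uIcc_of_le hπ.le]; exact Set.mem_Icc.mpr ⟨by linarith, by linarith⟩) right_mem_uIcc)
  have h1 : (∫ θ in (0:ℝ)..(π/2), fc θ * Real.cos (2*θ)) = π/4 - 0 := by
    apply intervalIntegral.integral_eq_sub_of_hasDerivAt_of_tendsto (by positivity)
      (fun θ hθ => F_hasDeriv (Real.cos_pos_of_mem_Ioo
        (Set.mem_Ioo.mpr ⟨by linarith [hθ.1], hθ.2⟩)).ne') hsub1
    · have hF0 : F 0 = 0 := by
        unfold F fc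
        norm_num
      have := (F_cont_at (by norm_num [Real.cos_zero] : Real.cos 0 ≠ 0)).tendsto.mono_left
        (nhdsWithin_le_nhds (s := Set.Ioi (0:ℝ)))
      rwa [hF0] at this
    · exact T1_tendsto_left
  have h2 : (∫ θ in (π/2)..π, fc θ * Real.cos (2*θ)) = π/2 - π/4 := by
    apply intervalIntegral.integral_eq_sub_of_hasDerivAt_of_tendsto (by linarith)
      (fun θ hθ => F_hasDeriv (Real.cos_neg_of_pi_div_two_lt_of_lt hθ.1
        (by linarith [hθ.2])).ne) hsub2
    · exact T1_tendsto_right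
    · have hFπ : F π = π/2 := by
        unfold F fc
        rw [show 2*π = 2*π by ring]
        rw [Real.sin_two_pi]
        norm_num
      have hcosπ : Real.cos π ≠ 0 := by rw [Real.cos_pi]; norm_num
      have := (F_cont_at hcosπ).tendsto.mono_left (nhdsWithin_le_nhds (s := Set.Iio π))
      rwa [hFπ] at this
  rw [← intervalIntegral.integral_add_adjacent_intervals hsub1 hsub2, h1, h2]
  ring


-- integrability of fc * sin^2 and fc^2 * sin^2
lemma fc_sin2_int : IntervalIntegrable (fun θ => fc θ * Real.sin θ ^ 2) volume 0 π := by
  apply (hcos_intInt.const_mul 4).mono_fun'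
    ((fc_meas.mul ((Real.continuous_sin.pow 2).measurable)).aestronglyMeasurable)
  apply MeasureTheory.ae_of_all
  intro θ
  have hb := abs_log_le_inv_sqrt _ (abs_nonneg (2 * Real.cos θ)) (abs_two_cos_le θ)
  have h1 : |fc θ * Real.sin θ ^ 2| ≤ |fc θ| := by
    rw [abs_mul, abs_of_nonneg (sq_nonneg (Real.sin θ))]
    nlinarith [Real.sin_sq_le_one θ, abs_nonneg (fc θ), sq_nonneg (Real.sin θ)]
  simp only [Real.norm_eq_abs]
  exact le_trans h1 hb

lemma fc_sq_sin2_int : IntervalIntegrable (fun θ => fc θ ^ 2 * Real.sin θ ^ 2) volume 0 π := by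
  apply (hcos_intInt.const_mul 16).mono_fun'
    (((fc_meas.pow_const 2).mul ((Real.continuous_sin.pow 2).measurable)).aestronglyMeasurable)
  apply MeasureTheory.ae_of_all
  intro θ
  have hb := log_sq_le_inv_sqrt _ (abs_nonneg (2 * Real.cos θ)) (abs_two_cos_le θ)
  have h1 : |fc θ ^ 2 * Real.sin θ ^ 2| ≤ fc θ ^ 2 := by
    rw [abs_mul, abs_of_nonneg (sq_nonneg (fc θ)), abs_of_nonneg (sq_nonneg (Real.sin θ))]
    nlinarith [Real.sin_sq_le_one θ, sq_nonneg (fc θ), sq_nonneg (Real.sin θ)]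
  simp only [Real.norm_eq_abs]
  exact le_trans h1 hb

lemma integral_fc_sin2 : (∫ θ in (0:ℝ)..π, fc θ * Real.sin θ ^ 2) = -(π/4) := by
  have hid : ∀ θ : ℝ, fc θ * Real.sin θ ^ 2 =
      (1/2) * fc θ - (1/2) * (fc θ * Real.cos (2*θ)) := by
    intro θ
    rw [Real.cos_two_mul]
    linear_combination fc θ * Real.sin_sq_add_cos_sq θ
  rw [intervalIntegral.integral_congr (fun θ _ => hid θ)]
  rw [intervalIntegral.integral_sub (fc_intInt.const_mul (1/2)) (fc_cos2_int.const_mul (1/2))]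
  rw [intervalIntegral.integral_const_mul, intervalIntegral.integral_const_mul]
  rw [integral_fc_zero, integral_fc_cos2]
  ring

lemma integral_hcos_le : (∫ θ in (0:ℝ)..π, |2 * Real.cos θ| ^ (-(1:ℝ)/2)) ≤ 6 := by
  have hπ := Real.pi_pos
  have hmono : (∫ θ in (0:ℝ)..π, |2 * Real.cos θ| ^ (-(1:ℝ)/2)) ≤
      ∫ θ in (0:ℝ)..π, |θ - π/2| ^ (-(1:ℝ)/2) := by
    apply intervalIntegral.integral_mono_on hπ.le hcos_intInt (intInt_inv_sqrt_abs (π/2) 0 π)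
    intro θ hθ
    apply ptwise_inv_sqrt (m := fun θ => 2 * Real.cos θ) (by simp [Real.cos_pi_div_two])
    exact jordan_cos (by rwa [uIcc_of_le hπ.le])
  have hval := integral_inv_sqrt_abs (π/2) 0 π
  rw [show π - π/2 = π/2 by ring, show (0:ℝ) - π/2 = -(π/2) by ring,
    show π/2 - (0:ℝ) = π/2 by ring, show π/2 - π = -(π/2) by ring,
    rpow_half_of_neg (by linarith : -(π/2) < 0)] at hval
  have h6 : (∫ θ in (0:ℝ)..π, |θ - π/2| ^ (-(1:ℝ)/2)) ≤ 6 := by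
    rw [hval]
    nlinarith [rpow_half_pi_half_le]
  linarith

lemma integral_fc_sq_sin2_le : (∫ θ in (0:ℝ)..π, fc θ ^ 2 * Real.sin θ ^ 2) ≤ 96 := by
  have hπ := Real.pi_pos
  have hmono : (∫ θ in (0:ℝ)..π, fc θ ^ 2 * Real.sin θ ^ 2) ≤
      ∫ θ in (0:ℝ)..π, 16 * |2 * Real.cos θ| ^ (-(1:ℝ)/2) := by
    apply intervalIntegral.integral_mono_on hπ.le fc_sq_sin2_int (hcos_intInt.const_mul 16)
    intro θ _
    have hb := log_sq_le_inv_sqrt _ (abs_nonneg (2 * Real.cos θ)) (abs_two_cos_le θ)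
    have hb' : fc θ ^ 2 ≤ 16 * |2 * Real.cos θ| ^ (-(1:ℝ)/2) := hb
    nlinarith [Real.sin_sq_le_one θ, sq_nonneg (fc θ), sq_nonneg (Real.sin θ)]
  rw [intervalIntegral.integral_const_mul] at hmono
  nlinarith [integral_hcos_le]

/-- Let `I(γ) = (2/π) ∫_0^π |2 cos θ|^γ sin² θ dθ`. Then `I(2) = 1` and
there is an absolute constant `c > 0` such that `I(γ) ≤ 1 - γ/2 + c γ²` for all
`γ ∈ (0,1)`. -/
theorem satoTate_moment_estimates :
    ((2 / Real.pi) *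
        (∫ θ in (0 : ℝ)..Real.pi, |2 * Real.cos θ| ^ ((2 : ℝ)) * Real.sin θ ^ 2) = 1) ∧
    ∃ c : ℝ, 0 < c ∧ ∀ γ : ℝ, 0 < γ → γ < 1 →
      (2 / Real.pi) * (∫ θ in (0 : ℝ)..Real.pi, |2 * Real.cos θ| ^ γ * Real.sin θ ^ 2)
        ≤ 1 - γ / 2 + c * γ ^ 2 := by
  have hπ := Real.pi_pos
  constructor
  · -- part 1
    have e : ∀ θ : ℝ, |2 * Real.cos θ| ^ ((2:ℝ)) * Real.sin θ ^ 2 =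
        4 * (Real.sin θ ^ 2 * Real.cos θ ^ 2) := by
      intro θ
      rw [show ((2:ℝ)) = ((2:ℕ):ℝ) by norm_num, Real.rpow_natCast]
      rw [sq_abs]
      ring
    rw [intervalIntegral.integral_congr (fun θ _ => e θ)]
    rw [intervalIntegral.integral_const_mul]
    rw [integral_sin_sq_mul_cos_sq]
    have h4 : Real.sin (4 * π) = 0 := by
      have := Real.sin_nat_mul_pi 4
      norm_num at this
      exact this
    have h0 : Real.sin (4 * 0) = 0 := by norm_num
    rw [h4, h0]
    field_simp
    ring
  · -- part 2
    refine ⟨64, by norm_num, fun γ hγ0 hγ1 => ?_⟩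
    -- pointwise bound
    have hpt : ∀ θ : ℝ, |2 * Real.cos θ| ^ γ * Real.sin θ ^ 2 ≤
        Real.sin θ ^ 2 + γ * (fc θ * Real.sin θ ^ 2) + γ^2 * (fc θ ^ 2 * Real.sin θ ^ 2) := by
      intro θ
      have hb := rpow_quad_bound (abs_nonneg (2 * Real.cos θ)) (abs_two_cos_le θ) hγ0 hγ1
      have hs := sq_nonneg (Real.sin θ)
      have := mul_le_mul_of_nonneg_right hb hs
      calc |2 * Real.cos θ| ^ γ * Real.sin θ ^ 2 ≤
          (1 + γ * Real.log |2 * Real.cos θ| + γ^2 * (Real.log |2 * Real.cos θ|)^2) *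
            Real.sin θ ^ 2 := this
        _ = Real.sin θ ^ 2 + γ * (fc θ * Real.sin θ ^ 2) +
            γ^2 * (fc θ ^ 2 * Real.sin θ ^ 2) := by unfold fc; ring
    -- integrability of LHS
    have hLcont : Continuous (fun θ => |2 * Real.cos θ| ^ γ * Real.sin θ ^ 2) := by
      apply Continuous.mul
      · exact (continuous_abs.comp (by continuity : Continuous fun θ : ℝ =>
          2 * Real.cos θ)).rpow_const (fun x => Or.inr hγ0.le)
      · exact Real.continuous_sin.pow 2
    have hsin2_int : IntervalIntegrable (fun θ : ℝ => Real.sin θ ^ 2) volume 0 π :=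
      (Real.continuous_sin.pow 2).intervalIntegrable 0 π
    have hRHS_int : IntervalIntegrable (fun θ => Real.sin θ ^ 2 + γ * (fc θ * Real.sin θ ^ 2) +
        γ^2 * (fc θ ^ 2 * Real.sin θ ^ 2)) volume 0 π :=
      (hsin2_int.add (fc_sin2_int.const_mul γ)).add (fc_sq_sin2_int.const_mul (γ^2))
    have hmono : (∫ θ in (0:ℝ)..π, |2 * Real.cos θ| ^ γ * Real.sin θ ^ 2) ≤
        ∫ θ in (0:ℝ)..π, (Real.sin θ ^ 2 + γ * (fc θ * Real.sin θ ^ 2) +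
          γ^2 * (fc θ ^ 2 * Real.sin θ ^ 2)) := by
      apply intervalIntegral.integral_mono_on hπ.le (hLcont.intervalIntegrable 0 π) hRHS_int
      exact fun θ _ => hpt θ
    have hsplit : (∫ θ in (0:ℝ)..π, (Real.sin θ ^ 2 + γ * (fc θ * Real.sin θ ^ 2) +
          γ^2 * (fc θ ^ 2 * Real.sin θ ^ 2))) =
        (∫ θ in (0:ℝ)..π, Real.sin θ ^ 2) + γ * (∫ θ in (0:ℝ)..π, fc θ * Real.sin θ ^ 2) +
        γ^2 * (∫ θ in (0:ℝ)..π, fc θ ^ 2 * Real.sin θ ^ 2) := by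
      rw [intervalIntegral.integral_add (hsin2_int.add (fc_sin2_int.const_mul γ))
        (fc_sq_sin2_int.const_mul (γ^2)),
        intervalIntegral.integral_add hsin2_int (fc_sin2_int.const_mul γ),
        intervalIntegral.integral_const_mul, intervalIntegral.integral_const_mul]
    have hsin2_val : (∫ θ in (0:ℝ)..π, Real.sin θ ^ 2) = π/2 := by
      rw [integral_sin_sq]
      simp [Real.sin_pi, Real.sin_zero]
    have hQ := integral_fc_sq_sin2_le
    have hI : (∫ θ in (0:ℝ)..π, |2 * Real.cos θ| ^ γ * Real.sin θ ^ 2) ≤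
        π/2 - γ * (π/4) + γ^2 * 96 := by
      rw [hsplit, hsin2_val, integral_fc_sin2] at hmono
      nlinarith [sq_nonneg γ]
    have h2π : 0 < 2/π := by positivity
    calc (2/π) * (∫ θ in (0:ℝ)..π, |2 * Real.cos θ| ^ γ * Real.sin θ ^ 2) ≤
        (2/π) * (π/2 - γ * (π/4) + γ^2 * 96) := by nlinarith [hI]
      _ = 1 - γ/2 + (192/π) * γ^2 := by field_simp; ring
      _ ≤ 1 - γ/2 + 64 * γ^2 := by
          have : (192:ℝ)/π ≤ 64 := by
            rw [div_le_iff₀ hπ]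
            nlinarith [Real.pi_gt_three]
          nlinarith [sq_nonneg γ]
end
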